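/- arXiv:1101.4393 — 7 statements merged into one kernel-verified Lean document; each statement's English description precedes it below -/
import Mathlib

section
/- Let G be a connected graph with n ≥ 2 vertices. Then DE(G) ≥ 2(n − 1), with equality if and only if G is the complete graph K_n. -/
open SimpleGraph Finset

/-- The distance matrix of a graph `G`: the `(i,j)` entry is the graph distance
between `i` and `j`, as a real number. -/
noncomputable def distMatrix {V : Type*} [Fintype V] (G : SimpleGraph V) : Matrix V V ℝ :=
  fun i j => (G.dist i j : ℝ)

lemma distMatrix_isHermitian {V : Type*} [Fintype V] (G : SimpleGraph V) :
    (distMatrix G).IsHermitian := by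
  unfold Matrix.IsHermitian
  ext i j
  simp [distMatrix, Matrix.conjTranspose_apply, SimpleGraph.dist_comm]

/-- The distance spectral radius of `G`: the largest eigenvalue of the distance matrix. -/
noncomputable def distSpectralRadius {V : Type*} [Fintype V] [DecidableEq V]
    (G : SimpleGraph V) : ℝ :=
  ⨆ i, (distMatrix_isHermitian G).eigenvalues i

/-- The distance energy of `G`: the sum of the absolute values of the eigenvalues of
the distance matrix. -/
noncomputable def distEnergy {V : Type*} [Fintype V] [DecidableEq V]
    (G : SimpleGraph V) : ℝ :=
  ∑ i, |(distMatrix_isHermitian G).eigenvalues i|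

open Matrix

/-- The trace of a real symmetric matrix is the sum of its eigenvalues. -/
lemma herm_trace_eq {m : Type*} [Fintype m] [DecidableEq m] {A : Matrix m m ℝ}
    (hA : A.IsHermitian) : A.trace = ∑ i, hA.eigenvalues i := by
  conv_lhs => rw [hA.spectral_theorem]
  rw [Unitary.conjStarAlgAut_apply]
  rw [Matrix.trace_mul_cycle]
  rw [show (star (hA.eigenvectorUnitary : Matrix m m ℝ)) * (hA.eigenvectorUnitary : Matrix m m ℝ)
      = 1 from (Matrix.mem_unitaryGroup_iff').mp (hA.eigenvectorUnitary).2]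
  simp [Matrix.trace_diagonal]

/-- Rayleigh-type upper bound: the quadratic form is at most the largest eigenvalue
times the squared norm. -/
lemma rayleigh_le {m : Type*} [Fintype m] [DecidableEq m] {A : Matrix m m ℝ}
    (hA : A.IsHermitian) (x : m → ℝ) {c : ℝ} (hc : ∀ i, hA.eigenvalues i ≤ c) :
    x ⬝ᵥ A *ᵥ x ≤ c * (x ⬝ᵥ x) := by
  set U : Matrix m m ℝ := (hA.eigenvectorUnitary : Matrix m m ℝ) with hU
  set y : m → ℝ := star U *ᵥ x with hy
  have hUs : U * star U = 1 := (Matrix.mem_unitaryGroup_iff).mp (hA.eigenvectorUnitary).2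
  have hvm : x ᵥ* U = y := by
    rw [hy, Matrix.star_eq_conjTranspose, Matrix.conjTranspose_eq_transpose_of_trivial,
      Matrix.mulVec_transpose]
  have h1 : x ⬝ᵥ A *ᵥ x = ∑ i, hA.eigenvalues i * (y i)^2 := by
    conv_lhs => rw [hA.spectral_theorem]
    rw [Unitary.conjStarAlgAut_apply, ← Matrix.mulVec_mulVec, ← Matrix.mulVec_mulVec, Matrix.dotProduct_mulVec, hvm, hy]
    simp [dotProduct, Matrix.mulVec_diagonal]
    ring_nf
    exact Finset.sum_congr rfl fun i _ => by ring
  have h2 : x ⬝ᵥ x = ∑ i, (y i)^2 := by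
    have hys : y ᵥ* star U = x := by
      rw [← Matrix.mulVec_transpose, Matrix.star_eq_conjTranspose,
        Matrix.conjTranspose_eq_transpose_of_trivial, Matrix.transpose_transpose, hy,
        Matrix.mulVec_mulVec, hUs, Matrix.one_mulVec]
    have : x ⬝ᵥ x = y ⬝ᵥ y := by
      conv_rhs => rw [hy]
      rw [Matrix.dotProduct_mulVec, hys]
    rw [this]
    simp [dotProduct, pow_two]
  rw [h1, h2, Finset.mul_sum]
  exact Finset.sum_le_sum fun i _ => mul_le_mul_of_nonneg_right (hc i) (sq_nonneg _)

/-- If `A + 1` is positive semidefinite, all eigenvalues of `A` are at least `-1`. -/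
lemma eig_ge_neg_one {m : Type*} [Fintype m] [DecidableEq m] {A : Matrix m m ℝ}
    (hA : A.IsHermitian) (h : (A + 1).PosSemidef) (i : m) : -1 ≤ hA.eigenvalues i := by
  set v : m → ℝ := ⇑(hA.eigenvectorBasis i) with hv
  have hnorm : v ⬝ᵥ v = 1 := by
    have h1 : ‖hA.eigenvectorBasis i‖ = 1 := hA.eigenvectorBasis.orthonormal.1 i
    have h2 : (inner ℝ (hA.eigenvectorBasis i) (hA.eigenvectorBasis i) : ℝ) = 1 := by
      rw [real_inner_self_eq_norm_sq, h1]; norm_num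
    rw [PiLp.inner_apply] at h2
    simpa [dotProduct, hv, pow_two] using h2
  have heig : hA.eigenvalues i = v ⬝ᵥ A *ᵥ v := by
    have := hA.eigenvalues_eq i
    simpa [dotProduct] using this
  have hp := h.dotProduct_mulVec_nonneg v
  simp only [Matrix.add_mulVec, Matrix.one_mulVec, dotProduct_add] at hp
  have : (0:ℝ) ≤ v ⬝ᵥ A *ᵥ v + v ⬝ᵥ v := by simpa using hp
  rw [hnorm] at this
  linarith [heig ▸ this]

/-- For a connected graph `G` with `n ≥ 2` vertices, `DE(G) ≥ 2(n-1)`, with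
equality if and only if `G` is the complete graph `K_n`. -/
theorem distEnergy_ge_two_n_sub_one {n : ℕ} (hn : 2 ≤ n) (G : SimpleGraph (Fin n))
    (hconn : G.Connected) :
    2 * ((n : ℝ) - 1) ≤ distEnergy G ∧
    (distEnergy G = 2 * ((n : ℝ) - 1) ↔ G = (⊤ : SimpleGraph (Fin n))) := by
  classical
  have hA := distMatrix_isHermitian G
  set ev : Fin n → ℝ := hA.eigenvalues with hev
  have hDE : distEnergy G = ∑ i, |ev i| := rfl
  have hnR : (0:ℝ) < n := by positivity
  have hnR1 : (1:ℝ) ≤ (n:ℝ) - 1 := by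
    have : (2:ℝ) ≤ n := by exact_mod_cast hn
    linarith
  -- trace is zero, so the eigenvalues sum to zero
  have htr : ∑ i, ev i = 0 := by
    rw [hev, ← herm_trace_eq hA]
    simp [Matrix.trace, Matrix.diag, distMatrix, SimpleGraph.dist_self]
  -- the all-ones vector
  set o : Fin n → ℝ := fun _ => 1 with ho
  have hoo : o ⬝ᵥ o = (n:ℝ) := by simp [dotProduct, ho]
  -- the quadratic form at the all-ones vector is the sum of off-diagonal distances
  have hW : o ⬝ᵥ distMatrix G *ᵥ o = ∑ p ∈ (univ : Finset (Fin n)).offDiag,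
      distMatrix G p.1 p.2 := by
    have h1 : o ⬝ᵥ distMatrix G *ᵥ o
        = ∑ p ∈ (univ ×ˢ univ : Finset (Fin n × Fin n)), distMatrix G p.1 p.2 := by
      rw [Finset.sum_product]
      simp [dotProduct, Matrix.mulVec, ho]
    rw [h1]
    refine (Finset.sum_subset (fun p hp => by simp) (fun p _ hp => ?_)).symm
    have : p.1 = p.2 := by
      by_contra hne
      exact hp (Finset.mem_offDiag.2 ⟨Finset.mem_univ _, Finset.mem_univ _, hne⟩)
    simp [distMatrix, this]
  have hcard : ((univ : Finset (Fin n)).offDiag.card : ℝ) = (n:ℝ) * ((n:ℝ) - 1) := by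
    rw [Finset.offDiag_card, Finset.card_univ, Fintype.card_fin]
    have h2 : n ≤ n * n := Nat.le_mul_of_pos_left n (by omega)
    push_cast [Nat.cast_sub h2]
    ring
  -- lower bound on the quadratic form
  have hge1 : ∀ p ∈ (univ : Finset (Fin n)).offDiag, (1:ℝ) ≤ distMatrix G p.1 p.2 := by
    intro p hp
    have hne : p.1 ≠ p.2 := (Finset.mem_offDiag.1 hp).2.2
    have : 0 < G.dist p.1 p.2 := hconn.pos_dist_of_ne hne
    have h1 : 1 ≤ G.dist p.1 p.2 := this
    show (1:ℝ) ≤ ((G.dist p.1 p.2 : ℕ) : ℝ)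
    exact_mod_cast h1
  have hWlb : (n:ℝ) * ((n:ℝ) - 1) ≤ o ⬝ᵥ distMatrix G *ᵥ o := by
    rw [hW, ← hcard]
    calc ((univ : Finset (Fin n)).offDiag.card : ℝ)
        = ∑ _p ∈ (univ : Finset (Fin n)).offDiag, (1:ℝ) := by simp
      _ ≤ _ := Finset.sum_le_sum hge1
  -- max eigenvalue
  have hne : (univ : Finset (Fin n)).Nonempty := ⟨⟨0, by omega⟩, Finset.mem_univ _⟩
  obtain ⟨j₀, -, hj₀⟩ := Finset.exists_max_image univ ev hne
  have hmax : ∀ i, ev i ≤ ev j₀ := fun i => hj₀ i (Finset.mem_univ i)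
  have hRay : o ⬝ᵥ distMatrix G *ᵥ o ≤ ev j₀ * (n:ℝ) := by
    have := rayleigh_le hA o (fun i => hmax i)
    rwa [hoo] at this
  have hj₀lb : (n:ℝ) - 1 ≤ ev j₀ := by
    nlinarith [hWlb, hRay]
  -- the energy is at least twice any nonnegative eigenvalue
  have h2l : ∀ j : Fin n, 2 * ev j ≤ ∑ i, |ev i| := by
    intro j
    have hsplit : ∑ i, |ev i| = |ev j| + ∑ i ∈ univ.erase j, |ev i| :=
      (Finset.add_sum_erase _ _ (Finset.mem_univ j)).symm
    have habs : |∑ i ∈ univ.erase j, ev i| ≤ ∑ i ∈ univ.erase j, |ev i| :=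
      Finset.abs_sum_le_sum_abs _ _
    have hsum : ∑ i ∈ univ.erase j, ev i = - ev j := by
      have h := Finset.add_sum_erase univ ev (Finset.mem_univ j)
      rw [htr] at h
      linarith
    rw [hsum, abs_neg] at habs
    have h1 : ev j ≤ |ev j| := le_abs_self _
    linarith [hsplit]
  have part1 : 2 * ((n:ℝ) - 1) ≤ distEnergy G := by
    rw [hDE]
    have := h2l j₀
    linarith
  refine ⟨part1, ?_, ?_⟩
  · -- DE = 2(n-1) → G = ⊤
    intro hE
    rw [hDE] at hE
    have hj₀ub : ev j₀ ≤ (n:ℝ) - 1 := by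
      have := h2l j₀
      linarith
    have hWub : o ⬝ᵥ distMatrix G *ᵥ o ≤ (n:ℝ) * ((n:ℝ) - 1) := by
      nlinarith [hRay]
    have hWeq : ∑ p ∈ (univ : Finset (Fin n)).offDiag, distMatrix G p.1 p.2
        = (n:ℝ) * ((n:ℝ) - 1) := by
      rw [← hW]; linarith
    have h0 : ∑ p ∈ (univ : Finset (Fin n)).offDiag, (distMatrix G p.1 p.2 - 1) = 0 := by
      rw [Finset.sum_sub_distrib, hWeq, Finset.sum_const, nsmul_eq_mul, hcard]
      ring
    have hterm := (Finset.sum_eq_zero_iff_of_nonneg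
      (fun p hp => sub_nonneg.2 (hge1 p hp))).1 h0
    ext i j
    simp only [SimpleGraph.top_adj]
    constructor
    · exact fun h => h.ne
    · intro hij
      have hp : (i, j) ∈ (univ : Finset (Fin n)).offDiag :=
        Finset.mem_offDiag.2 ⟨Finset.mem_univ _, Finset.mem_univ _, hij⟩
      have h1 := hterm _ hp
      have h2 : distMatrix G i j = 1 := by linarith [sub_eq_zero.1 h1]
      have h2' : ((G.dist i j : ℕ) : ℝ) = 1 := h2
      have h3 : G.dist i j = 1 := by exact_mod_cast h2'
      exact SimpleGraph.dist_eq_one_iff_adj.mp h3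
  · -- G = ⊤ → DE = 2(n-1)
    intro hGtop
    subst hGtop
    -- distMatrix ⊤ + 1 is the all-ones matrix, which is PSD
    have hone : distMatrix (⊤ : SimpleGraph (Fin n)) + 1
        = Matrix.of (fun _ _ => (1:ℝ)) := by
      ext i j
      by_cases hij : i = j
      · subst hij
        simp [distMatrix, Matrix.one_apply]
      · have hd : (⊤ : SimpleGraph (Fin n)).dist i j = 1 :=
          SimpleGraph.dist_eq_one_iff_adj.mpr (by simp [hij])
        simp [distMatrix, Matrix.one_apply, hij, hd]
    have hpsd : (distMatrix (⊤ : SimpleGraph (Fin n)) + 1).PosSemidef := by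
      rw [hone]
      refine Matrix.PosSemidef.of_dotProduct_mulVec_nonneg ?_ ?_
      · ext i j
        simp [Matrix.conjTranspose_apply]
      · intro x
        have hq : star x ⬝ᵥ (Matrix.of (fun _ _ => (1:ℝ))) *ᵥ x
            = (∑ i, x i) * (∑ i, x i) := by
          simp [dotProduct, Matrix.mulVec, Finset.sum_mul]
        rw [hq]
        exact mul_self_nonneg _
    have hlb1 : ∀ i, -1 ≤ ev i := fun i => eig_ge_neg_one hA hpsd i
    have hub : ∑ i, |ev i| ≤ 2 * ((n:ℝ) - 1) := by
      have hsplit : ∑ i, |ev i| = |ev j₀| + ∑ i ∈ univ.erase j₀, |ev i| :=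
        (Finset.add_sum_erase _ _ (Finset.mem_univ j₀)).symm
      have habs : ∀ i ∈ univ.erase j₀, |ev i| ≤ ev i + 2 := fun i _ =>
        abs_le.2 ⟨by linarith [hlb1 i], by linarith⟩
      have hsum : ∑ i ∈ univ.erase j₀, ev i = - ev j₀ := by
        have h := Finset.add_sum_erase univ ev (Finset.mem_univ j₀)
        rw [htr] at h
        linarith
      have hcarde : ((univ.erase j₀).card : ℝ) = (n:ℝ) - 1 := by
        rw [Finset.card_erase_of_mem (Finset.mem_univ _), Finset.card_univ, Fintype.card_fin]
        push_cast [Nat.cast_sub (by omega : 1 ≤ n)]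
        ring
      have hle : ∑ i ∈ univ.erase j₀, |ev i| ≤ - ev j₀ + 2 * ((n:ℝ) - 1) := by
        calc ∑ i ∈ univ.erase j₀, |ev i| ≤ ∑ i ∈ univ.erase j₀, (ev i + 2) :=
              Finset.sum_le_sum habs
          _ = - ev j₀ + 2 * ((n:ℝ) - 1) := by
              rw [Finset.sum_add_distrib, hsum, Finset.sum_const, nsmul_eq_mul, hcarde]
              ring
      have habsj : |ev j₀| = ev j₀ := abs_of_nonneg (by linarith)
      rw [hsplit, habsj]
      linarith
    rw [hDE]
    linarith [part1, hDE ▸ hub]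
end

section
/- Let G be a connected graph with n vertices, maximum degree Δ₁ and second maximum degree Δ₂. Then DE(G) ≥ 2·√((2n−2−Δ₁)(2n−2−Δ₂)). -/
open SimpleGraph Finset

section Aux
open Matrix
variable {V : Type*} [Fintype V] [DecidableEq V] {A : Matrix V V ℝ} (hA : A.IsHermitian)

lemma aux_trace_eq : ∑ i, hA.eigenvalues i = A.trace := by
  conv_rhs => rw [hA.spectral_theorem, Unitary.conjStarAlgAut_apply]
  rw [Matrix.trace_mul_cycle]
  have h1 : (star (hA.eigenvectorUnitary : Matrix V V ℝ)) * (hA.eigenvectorUnitary : Matrix V V ℝ) = 1 := by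
    exact_mod_cast Unitary.coe_star_mul_self _
  rw [h1, Matrix.one_mul, Matrix.trace_diagonal]
  simp

lemma aux_quad_eq (x : V → ℝ) :
    dotProduct x (A *ᵥ x)
      = ∑ i, hA.eigenvalues i * ((star (hA.eigenvectorUnitary : Matrix V V ℝ) *ᵥ x) i)^2 := by
  set U := (hA.eigenvectorUnitary : Matrix V V ℝ) with hU
  set y := star U *ᵥ x with hy
  conv_lhs => rw [hA.spectral_theorem, Unitary.conjStarAlgAut_apply]
  rw [← Matrix.mulVec_mulVec, ← Matrix.mulVec_mulVec, dotProduct_mulVec]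
  have hxU : x ᵥ* U = y := by
    rw [hy, Matrix.star_eq_conjTranspose, Matrix.conjTranspose_eq_transpose_of_trivial,
      Matrix.mulVec_transpose]
  rw [hxU, ← hy]
  simp only [dotProduct, Matrix.mulVec_diagonal]
  refine Finset.sum_congr rfl fun i _ => ?_
  simp [pow_two]
  ring

lemma aux_norm_eq (x : V → ℝ) :
    dotProduct x x = ∑ i, ((star (hA.eigenvectorUnitary : Matrix V V ℝ) *ᵥ x) i)^2 := by
  set U := (hA.eigenvectorUnitary : Matrix V V ℝ) with hU
  set y := star U *ᵥ x with hy
  have h1 : U * star U = 1 := by exact_mod_cast Unitary.coe_mul_star_self _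
  have h2 : dotProduct x x = dotProduct x ((U * star U) *ᵥ x) := by
    rw [h1, Matrix.one_mulVec]
  rw [h2, ← Matrix.mulVec_mulVec, dotProduct_mulVec]
  have hxU : x ᵥ* U = y := by
    rw [hy, Matrix.star_eq_conjTranspose, Matrix.conjTranspose_eq_transpose_of_trivial,
      Matrix.mulVec_transpose]
  rw [hxU, ← hy]
  simp [dotProduct, pow_two]

lemma aux_rayleigh (x : V → ℝ) {j : V} (hj : ∀ i, hA.eigenvalues i ≤ hA.eigenvalues j) :
    dotProduct x (A *ᵥ x) ≤ hA.eigenvalues j * dotProduct x x := by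
  rw [aux_quad_eq hA x, aux_norm_eq hA x, Finset.mul_sum]
  exact Finset.sum_le_sum fun i _ => mul_le_mul_of_nonneg_right (hj i) (sq_nonneg _)

lemma aux_energy {f : V → ℝ} (h0 : ∑ i, f i = 0) {j : V} (hj : 0 ≤ f j) :
    2 * f j ≤ ∑ i, |f i| := by
  have h1 : ∑ i ∈ Finset.univ.erase j, f i = -f j := by
    have := Finset.add_sum_erase Finset.univ f (Finset.mem_univ j)
    linarith
  have h2 : |∑ i ∈ Finset.univ.erase j, f i| ≤ ∑ i ∈ Finset.univ.erase j, |f i| :=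
    Finset.abs_sum_le_sum_abs _ _
  have h3 : ∑ i, |f i| = |f j| + ∑ i ∈ Finset.univ.erase j, |f i| :=
    (Finset.add_sum_erase Finset.univ (fun i => |f i|) (Finset.mem_univ j)).symm
  rw [h1, abs_neg, abs_of_nonneg hj] at h2
  rw [h3, abs_of_nonneg hj]
  linarith

end Aux

/-- For a connected graph `G` on `n` vertices with maximum degree `Δ₁` and second
maximum degree `Δ₂`, `DE(G) ≥ 2√((2n-2-Δ₁)(2n-2-Δ₂))`. -/
theorem distEnergy_lower_bound_degrees {n : ℕ} (G : SimpleGraph (Fin n))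
    [DecidableRel G.Adj] (hconn : G.Connected) (Δ₁ Δ₂ : ℕ) (u v : Fin n) (huv : u ≠ v)
    (hu : G.degree u = Δ₁) (hv : G.degree v = Δ₂)
    (hmax : ∀ w, G.degree w ≤ Δ₁) (hmax2 : ∀ w, w ≠ u → G.degree w ≤ Δ₂) :
    2 * Real.sqrt ((2 * (n : ℝ) - 2 - (Δ₁ : ℝ)) * (2 * (n : ℝ) - 2 - (Δ₂ : ℝ))) ≤
      distEnergy G := by
  classical
  set hH := distMatrix_isHermitian G with hHdef
  have hn2 : 2 ≤ n := by
    have : 1 < Fintype.card (Fin n) := Fintype.one_lt_card_iff_nontrivial.mpr ⟨⟨u, v, huv⟩⟩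
    simp at this; omega
  have hnpos : (0:ℝ) < n := by positivity
  obtain ⟨j, -, hj⟩ := Finset.exists_max_image Finset.univ hH.eigenvalues ⟨u, Finset.mem_univ u⟩
  have hj' : ∀ i, hH.eigenvalues i ≤ hH.eigenvalues j := fun i => hj i (Finset.mem_univ i)
  have htr : ∑ i, hH.eigenvalues i = 0 := by
    rw [aux_trace_eq]
    simp [Matrix.trace, distMatrix, Matrix.diag, SimpleGraph.dist_self]
  -- Rayleigh with ones vector
  have hray := aux_rayleigh hH (fun _ => (1:ℝ)) hj'
  have hdot : dotProduct (fun _ => (1:ℝ)) (fun _ : Fin n => (1:ℝ)) = (n:ℝ) := by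
    simp [dotProduct]
  have hquad : dotProduct (fun _ => (1:ℝ)) (Matrix.mulVec (distMatrix G) (fun _ => (1:ℝ)))
      = ∑ w, ∑ x, (G.dist w x : ℝ) := by
    simp [dotProduct, Matrix.mulVec, distMatrix]
  rw [hdot, hquad] at hray
  -- row sums
  have hrow : ∀ w : Fin n, 2 * (n:ℝ) - 2 - G.degree w ≤ ∑ x, (G.dist w x : ℝ) := by
    intro w
    have hle : ∀ x : Fin n,
        ((2:ℝ) - (if x = w then 2 else 0) - (if G.Adj w x then 1 else 0)) ≤ (G.dist w x : ℝ) := by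
      intro x
      by_cases hxw : x = w
      · subst hxw
        simp [G.irrefl]
      · by_cases hadj : G.Adj w x
        · simp only [hxw, if_false, hadj, if_true]
          have : 1 ≤ G.dist w x := hconn.pos_dist_of_ne (Ne.symm hxw)
          have : (1:ℝ) ≤ G.dist w x := by exact_mod_cast this
          linarith
        · simp only [hxw, if_false, hadj]
          have h1 : G.dist w x ≠ 1 := fun h => hadj (SimpleGraph.dist_eq_one_iff_adj.mp h)
          have h0 : 0 < G.dist w x := hconn.pos_dist_of_ne (Ne.symm hxw)
          have h2 : 2 ≤ G.dist w x := by omega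
          have : (2:ℝ) ≤ G.dist w x := by exact_mod_cast h2
          linarith
    have hdeg : ∑ x, (if G.Adj w x then (1:ℝ) else 0) = G.degree w := by
      rw [SimpleGraph.degree, SimpleGraph.neighborFinset_eq_filter]
      simp [Finset.sum_boole]
    have hsum : ∑ x, ((2:ℝ) - (if x = w then 2 else 0) - (if G.Adj w x then 1 else 0))
        = 2 * (n:ℝ) - 2 - G.degree w := by
      rw [Finset.sum_sub_distrib, Finset.sum_sub_distrib, hdeg, Finset.sum_const,
        Finset.sum_ite_eq' Finset.univ w (fun _ => (2:ℝ))]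
      simp [Finset.card_univ]
      ring
    calc 2 * (n:ℝ) - 2 - G.degree w = _ := hsum.symm
    _ ≤ _ := Finset.sum_le_sum fun x _ => hle x
  -- total sum lower bound
  have hdegsum : ∑ w, (G.degree w : ℝ) ≤ (Δ₁:ℝ) + ((n:ℝ) - 1) * Δ₂ := by
    have hsplit : ∑ w, (G.degree w : ℝ)
        = (G.degree u : ℝ) + ∑ w ∈ Finset.univ.erase u, (G.degree w : ℝ) :=
      (Finset.add_sum_erase Finset.univ (fun w => (G.degree w : ℝ)) (Finset.mem_univ u)).symm
    have hbound : ∑ w ∈ Finset.univ.erase u, (G.degree w : ℝ)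
        ≤ (Finset.univ.erase u).card • (Δ₂:ℝ) := by
      apply Finset.sum_le_card_nsmul
      intro w hw
      exact_mod_cast hmax2 w (Finset.ne_of_mem_erase hw)
    have hcard : (Finset.univ.erase u).card = n - 1 := by
      rw [Finset.card_erase_of_mem (Finset.mem_univ u), Finset.card_univ, Fintype.card_fin]
    rw [hcard] at hbound
    have hc : ((n - 1 : ℕ) : ℝ) = (n:ℝ) - 1 := by
      have : (1:ℕ) ≤ n := by omega
      push_cast [this]
      ring
    rw [nsmul_eq_mul, hc] at hbound
    rw [hsplit, hu]
    linarith
  have hS : 2 * (n:ℝ) * n - 2 * n - (Δ₁:ℝ) - ((n:ℝ) - 1) * Δ₂ ≤ ∑ w, ∑ x, (G.dist w x : ℝ) := by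
    have h1 : ∑ w, (2 * (n:ℝ) - 2 - G.degree w) ≤ ∑ w : Fin n, ∑ x, (G.dist w x : ℝ) :=
      Finset.sum_le_sum fun w _ => hrow w
    have h2 : ∑ w : Fin n, (2 * (n:ℝ) - 2 - G.degree w)
        = (n:ℝ) * (2 * n - 2) - ∑ w, (G.degree w : ℝ) := by
      rw [Finset.sum_sub_distrib, Finset.sum_const, Finset.card_univ, Fintype.card_fin,
        nsmul_eq_mul]
    rw [h2] at h1
    nlinarith [hdegsum]
  -- arithmetic
  set a : ℝ := 2 * (n:ℝ) - 2 - Δ₁ with hadef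
  set b : ℝ := 2 * (n:ℝ) - 2 - Δ₂ with hbdef
  have hΔ₁ : (Δ₁:ℝ) ≤ (n:ℝ) - 1 := by
    have := G.degree_lt_card_verts u
    rw [hu, Fintype.card_fin] at this
    have : Δ₁ ≤ n - 1 := by omega
    have h1n : (1:ℕ) ≤ n := by omega
    calc (Δ₁:ℝ) ≤ ((n-1 : ℕ):ℝ) := by exact_mod_cast this
    _ = (n:ℝ) - 1 := by push_cast [h1n]; ring
  have hΔ₂₁ : (Δ₂:ℝ) ≤ (Δ₁:ℝ) := by exact_mod_cast hv ▸ hmax v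
  have ha : 0 ≤ a := by rw [hadef]; linarith
  have hab : a ≤ b := by rw [hadef, hbdef]; linarith
  have hb : 0 ≤ b := le_trans ha hab
  set s : ℝ := Real.sqrt (a * b) with hsdef
  have hs0 : 0 ≤ s := Real.sqrt_nonneg _
  have hs2 : s ^ 2 = a * b := Real.sq_sqrt (mul_nonneg ha hb)
  have hsavg : s ≤ (a + b) / 2 := by
    rw [hsdef]
    have h := Real.sqrt_le_sqrt (show a * b ≤ ((a + b) / 2)^2 by nlinarith [sq_nonneg (a-b)])
    rwa [Real.sqrt_sq (by linarith)] at h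
  have hsb : s ≤ b := by linarith
  -- n * λj ≥ a + (n-1) b ≥ n s
  have hlam : s ≤ hH.eigenvalues j := by
    have hanb : a + ((n:ℝ) - 1) * b ≤ (n:ℝ) * hH.eigenvalues j := by
      have : a + ((n:ℝ) - 1) * b = 2 * (n:ℝ) * n - 2 * n - (Δ₁:ℝ) - ((n:ℝ) - 1) * Δ₂ := by
        rw [hadef, hbdef]; ring
      rw [this]
      calc 2 * (n:ℝ) * n - 2 * n - (Δ₁:ℝ) - ((n:ℝ) - 1) * Δ₂ ≤ _ := hS
      _ ≤ hH.eigenvalues j * n := hray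
      _ = (n:ℝ) * hH.eigenvalues j := mul_comm _ _
    have hns : (n:ℝ) * s ≤ a + ((n:ℝ) - 1) * b := by
      have hmn : 0 ≤ ((n:ℝ) - 2) * (b - s) :=
        mul_nonneg (by linarith [show (2:ℝ) ≤ (n:ℝ) from by exact_mod_cast hn2]) (by linarith)
      nlinarith
    have := le_trans hns hanb
    exact le_of_mul_le_mul_left (by linarith) hnpos
  have hjpos : 0 ≤ hH.eigenvalues j := le_trans hs0 hlam
  have hE := aux_energy htr hjpos
  calc 2 * s ≤ 2 * hH.eigenvalues j := by linarith
  _ ≤ ∑ i, |hH.eigenvalues i| := hE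
  _ = distEnergy G := rfl
end

section
/- Let G be a triangle-free and quadrangle-free connected graph with n ≥ 2 vertices and m edges. Then DE(G) ≥ 2·[3(n − 1) − 2m/n − M₁(G)/n], where M₁(G) = Σ_i d_i² is the first Zagreb index of G. -/
open SimpleGraph Finset

section Aux

variable {n : ℕ} (G : SimpleGraph (Fin n)) [DecidableRel G.Adj]

/-- The number of ordered pairs at distance 2 is at most `∑ (d_k² - d_k)`. -/
lemma card_dist_two_le (hconn : G.Connected) :
    (((univ ×ˢ univ : Finset (Fin n × Fin n)).filter
        (fun p => G.dist p.1 p.2 = 2)).card : ℝ) ≤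
      ∑ k, ((G.degree k : ℝ) ^ 2 - G.degree k) := by
  classical
  set T : Finset ((_ : Fin n) × (Fin n × Fin n)) :=
    (univ : Finset (Fin n)).sigma (fun k => (G.neighborFinset k).offDiag) with hT
  have hTcard : (T.card : ℝ) = ∑ k, ((G.degree k : ℝ) ^ 2 - G.degree k) := by
    rw [hT, Finset.card_sigma, Nat.cast_sum]
    refine Finset.sum_congr rfl fun k _ => ?_
    rw [Finset.offDiag_card]
    have hle : (G.neighborFinset k).card ≤
        (G.neighborFinset k).card * (G.neighborFinset k).card := by
      rcases Nat.eq_zero_or_pos (G.neighborFinset k).card with h | h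
      · simp [h]
      · exact Nat.le_mul_of_pos_left _ h
    rw [Nat.cast_sub hle]
    rw [SimpleGraph.card_neighborFinset_eq_degree]
    push_cast
    ring
  have hmid : ∀ p ∈ (univ ×ˢ univ : Finset (Fin n × Fin n)).filter
      (fun p => G.dist p.1 p.2 = 2), ∃ k, G.Adj p.1 k ∧ G.Adj k p.2 := by
    intro p hp
    rw [Finset.mem_filter] at hp
    obtain ⟨w, hw⟩ := hconn.exists_walk_length_eq_dist p.1 p.2
    rw [hp.2] at hw
    refine ⟨w.getVert 1, ?_, ?_⟩
    · have h := w.adj_getVert_succ (i := 0) (by omega)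
      simpa [SimpleGraph.Walk.getVert_zero] using h
    · have h := w.adj_getVert_succ (i := 1) (by omega)
      have h2 : w.getVert 2 = p.2 := by
        have h3 := w.getVert_length
        rw [hw] at h3
        exact h3
      rwa [h2] at h
  set f : Fin n × Fin n → ((_ : Fin n) × (Fin n × Fin n)) := fun p =>
    if h : ∃ k, G.Adj p.1 k ∧ G.Adj k p.2 then ⟨h.choose, p⟩ else ⟨p.1, p⟩ with hf
  have hsnd : ∀ p, (f p).2 = p := by
    intro p
    rw [hf]
    dsimp only
    split <;> rfl
  have hcard : ((univ ×ˢ univ : Finset (Fin n × Fin n)).filter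
      (fun p => G.dist p.1 p.2 = 2)).card ≤ T.card := by
    apply Finset.card_le_card_of_injOn f
    · intro p hp
      have hex := hmid p hp
      rw [Finset.mem_coe, Finset.mem_filter] at hp
      have hne : p.1 ≠ p.2 := by
        intro h
        rw [h, SimpleGraph.dist_self] at hp
        omega
      rw [hf]
      dsimp only
      rw [dif_pos hex]
      obtain ⟨h1, h2⟩ := hex.choose_spec
      refine Finset.mem_sigma.mpr ⟨Finset.mem_univ _, ?_⟩
      exact Finset.mem_offDiag.mpr ⟨(SimpleGraph.mem_neighborFinset _ _ _).mpr h1.symm,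
        (SimpleGraph.mem_neighborFinset _ _ _).mpr h2, hne⟩
    · intro p _ q _ hpq
      have := congrArg (fun s : ((_ : Fin n) × (Fin n × Fin n)) => s.2) hpq
      simpa [hsnd] using this
  calc (((univ ×ˢ univ : Finset (Fin n × Fin n)).filter
        (fun p => G.dist p.1 p.2 = 2)).card : ℝ)
      ≤ (T.card : ℝ) := by exact_mod_cast hcard
    _ = _ := hTcard

end Aux

/-- For a triangle-free and quadrangle-free connected graph `G` with `n ≥ 2` vertices
and `m` edges, `DE(G) ≥ 2[3(n-1) - 2m/n - M₁(G)/n]`, where `M₁(G) = Σᵢ dᵢ²` is the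
first Zagreb index. -/
theorem distEnergy_ge_zagreb {n : ℕ} (hn : 2 ≤ n) (G : SimpleGraph (Fin n))
    [DecidableRel G.Adj] (hconn : G.Connected)
    (htri : ∀ (x : Fin n) (c : G.Walk x x), c.IsCycle → c.length ≠ 3)
    (hquad : ∀ (x : Fin n) (c : G.Walk x x), c.IsCycle → c.length ≠ 4)
    (m : ℕ) (hm : G.edgeFinset.card = m) :
    2 * (3 * ((n : ℝ) - 1) - 2 * (m : ℝ) / (n : ℝ) -
        (∑ i : Fin n, (G.degree i : ℝ) ^ 2) / (n : ℝ)) ≤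
      distEnergy G := by
  classical
  have hA := distMatrix_isHermitian G
  set lam : Fin n → ℝ := hA.eigenvalues with hlam
  set U : Matrix (Fin n) (Fin n) ℝ := (hA.eigenvectorUnitary : Matrix (Fin n) (Fin n) ℝ)
    with hUdef
  have hU1 : star U * U = 1 := Matrix.mem_unitaryGroup_iff'.mp (hA.eigenvectorUnitary).2
  have hcol : ∀ k, ∑ i, U i k ^ 2 = 1 := by
    intro k
    have h := congrArg (fun M : Matrix (Fin n) (Fin n) ℝ => M k k) hU1
    simpa [Matrix.mul_apply, Matrix.one_apply, Matrix.star_apply, sq] using h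
  have hAentry : ∀ i j, distMatrix G i j = ∑ k, U i k * lam k * U j k := by
    intro i j
    conv_lhs => rw [hA.spectral_theorem]
    simp [Matrix.mul_apply, Matrix.diagonal_apply, Matrix.star_apply, ite_mul, mul_ite,
      RCLike.ofReal_real_eq_id, ← hUdef, ← hlam]
  have htrace : ∑ k, lam k = 0 := by
    have h1 : (distMatrix G).trace = 0 := by
      simp [Matrix.trace, Matrix.diag, distMatrix, SimpleGraph.dist_self]
    have h2 : (distMatrix G).trace = ∑ k, lam k := by
      conv_lhs => rw [hA.spectral_theorem]
      rw [Unitary.conjStarAlgAut_apply]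
      rw [Matrix.trace_mul_cycle]
      rw [← hUdef, hU1, one_mul, Matrix.trace_diagonal]
      simp [RCLike.ofReal_real_eq_id, ← hlam]
    rw [h2] at h1; exact h1
  -- the sum of all entries equals `∑ k, lam k * (column sum)²`
  have hsum_eq : ∑ i, ∑ j, distMatrix G i j = ∑ k, lam k * (∑ i, U i k) ^ 2 := by
    simp only [hAentry]
    calc ∑ i, ∑ j, ∑ k, U i k * lam k * U j k
        = ∑ i, ∑ k, U i k * lam k * ∑ j, U j k := by
          refine Finset.sum_congr rfl fun i _ => ?_
          rw [Finset.sum_comm]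
          exact Finset.sum_congr rfl fun k _ => (Finset.mul_sum _ _ _).symm
      _ = ∑ k, ((∑ i, U i k) * lam k) * ∑ j, U j k := by
          rw [Finset.sum_comm]
          refine Finset.sum_congr rfl fun k _ => ?_
          rw [← Finset.sum_mul, ← Finset.sum_mul]
      _ = ∑ k, lam k * (∑ i, U i k) ^ 2 := Finset.sum_congr rfl fun k _ => by ring
  have hck : ∀ k, (0:ℝ) ≤ (∑ i, U i k) ^ 2 ∧ (∑ i, U i k) ^ 2 ≤ (n : ℝ) := by
    intro k
    refine ⟨sq_nonneg _, ?_⟩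
    have h := sq_sum_le_card_mul_sum_sq (s := (univ : Finset (Fin n))) (f := fun i => U i k)
    simpa [hcol k] using h
  have hub : ∑ i, ∑ j, distMatrix G i j ≤ (n : ℝ) * ∑ k, max (lam k) 0 := by
    rw [hsum_eq, Finset.mul_sum]
    refine Finset.sum_le_sum fun k _ => ?_
    obtain ⟨h0, h1⟩ := hck k
    rcases le_total (lam k) 0 with h | h
    · calc lam k * (∑ i, U i k) ^ 2 ≤ 0 := mul_nonpos_of_nonpos_of_nonneg h h0
        _ ≤ (n:ℝ) * max (lam k) 0 := by positivity
    · rw [max_eq_left h, mul_comm ((n:ℝ)) (lam k)]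
      exact mul_le_mul_of_nonneg_left h1 h
  have hDE : distEnergy G = 2 * ∑ k, max (lam k) 0 := by
    unfold distEnergy
    have habs : ∀ x : ℝ, |x| = 2 * max x 0 - x := by
      intro x
      rcases le_total x 0 with h | h
      · rw [abs_of_nonpos h, max_eq_right h]; ring
      · rw [abs_of_nonneg h, max_eq_left h]; ring
    calc ∑ k, |lam k| = ∑ k, (2 * max (lam k) 0 - lam k) :=
          Finset.sum_congr rfl fun k _ => habs _
      _ = 2 * ∑ k, max (lam k) 0 - ∑ k, lam k := by
          rw [Finset.sum_sub_distrib, Finset.mul_sum]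
      _ = 2 * ∑ k, max (lam k) 0 := by rw [htrace]; ring
  -- combinatorial lower bound on the sum of distances
  have hkey : ∀ i j : Fin n, (3:ℝ) - G.dist i j ≤
      (if i = j then (3:ℝ) else 0) + (if G.Adj i j then (2:ℝ) else 0) +
        (if G.dist i j = 2 then (1:ℝ) else 0) := by
    intro i j
    by_cases h1 : i = j
    · subst h1
      simp [SimpleGraph.dist_self]
    by_cases h2 : G.Adj i j
    · have hd : G.dist i j = 1 := SimpleGraph.dist_eq_one_iff_adj.mpr h2
      rw [hd]
      simp only [h1, h2, if_false, if_true]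
      norm_num
    by_cases h3 : G.dist i j = 2
    · rw [h3]
      simp only [h1, h2, if_false, if_true]
      norm_num
    · have hd0 : 0 < G.dist i j := hconn.pos_dist_of_ne h1
      have hd1 : G.dist i j ≠ 1 := fun h => h2 (SimpleGraph.dist_eq_one_iff_adj.mp h)
      have hd3 : 3 ≤ G.dist i j := by omega
      have : (3:ℝ) ≤ G.dist i j := by exact_mod_cast hd3
      simp only [h1, h2, h3, if_false]
      linarith
  have hdeg : ∑ i : Fin n, (G.degree i : ℝ) = 2 * m := by
    have h := G.sum_degrees_eq_twice_card_edges
    rw [hm] at h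
    exact_mod_cast h
  have hP2 := card_dist_two_le G hconn
  have hcount : (3:ℝ) * n * n - ∑ i, ∑ j, distMatrix G i j ≤
      3 * n + 2 * (2 * m) + (∑ i : Fin n, (G.degree i : ℝ) ^ 2 - 2 * m) := by
    have hs : ∑ i : Fin n, ∑ j : Fin n, ((3:ℝ) - G.dist i j) ≤
        ∑ i : Fin n, ∑ j : Fin n, ((if i = j then (3:ℝ) else 0) +
          (if G.Adj i j then (2:ℝ) else 0) + (if G.dist i j = 2 then (1:ℝ) else 0)) :=
      Finset.sum_le_sum fun i _ => Finset.sum_le_sum fun j _ => hkey i j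
    have e1 : ∑ i : Fin n, ∑ j : Fin n, ((3:ℝ) - G.dist i j) =
        3 * n * n - ∑ i, ∑ j, distMatrix G i j := by
      simp only [Finset.sum_sub_distrib, Finset.sum_const, Finset.card_univ,
        Fintype.card_fin, nsmul_eq_mul, distMatrix]
      ring
    have e2 : ∑ i : Fin n, ∑ j : Fin n, (if i = j then (3:ℝ) else 0) = 3 * n := by
      simp only [Finset.sum_ite_eq, Finset.mem_univ, if_true, Finset.sum_const,
        Finset.card_univ, Fintype.card_fin, nsmul_eq_mul]
      ring
    have e3 : ∑ i : Fin n, ∑ j : Fin n, (if G.Adj i j then (2:ℝ) else 0) = 2 * (2 * m) := by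
      have : ∀ i : Fin n, ∑ j : Fin n, (if G.Adj i j then (2:ℝ) else 0) =
          2 * (G.degree i : ℝ) := by
        intro i
        rw [← Finset.sum_filter, ← SimpleGraph.neighborFinset_eq_filter, Finset.sum_const,
          nsmul_eq_mul, SimpleGraph.card_neighborFinset_eq_degree]
        ring
      rw [Finset.sum_congr rfl fun i _ => this i, ← Finset.mul_sum, hdeg]
    have e4 : ∑ i : Fin n, ∑ j : Fin n, (if G.dist i j = 2 then (1:ℝ) else 0) ≤
        ∑ i : Fin n, (G.degree i : ℝ) ^ 2 - 2 * m := by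
      have : ∑ i : Fin n, ∑ j : Fin n, (if G.dist i j = 2 then (1:ℝ) else 0) =
          (((univ ×ˢ univ : Finset (Fin n × Fin n)).filter
            (fun p => G.dist p.1 p.2 = 2)).card : ℝ) := by
        rw [← Finset.sum_product']
        rw [Finset.card_filter]
        push_cast
        rfl
      rw [this]
      calc (((univ ×ˢ univ : Finset (Fin n × Fin n)).filter
            (fun p => G.dist p.1 p.2 = 2)).card : ℝ)
          ≤ ∑ k, ((G.degree k : ℝ) ^ 2 - G.degree k) := hP2
        _ = ∑ i : Fin n, (G.degree i : ℝ) ^ 2 - 2 * m := by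
            rw [Finset.sum_sub_distrib, hdeg]
    calc (3:ℝ) * n * n - ∑ i, ∑ j, distMatrix G i j
        = ∑ i : Fin n, ∑ j : Fin n, ((3:ℝ) - G.dist i j) := e1.symm
      _ ≤ _ := hs
      _ = (∑ i : Fin n, ∑ j : Fin n, (if i = j then (3:ℝ) else 0)) +
          (∑ i : Fin n, ∑ j : Fin n, (if G.Adj i j then (2:ℝ) else 0)) +
          (∑ i : Fin n, ∑ j : Fin n, (if G.dist i j = 2 then (1:ℝ) else 0)) := by
            rw [← Finset.sum_add_distrib, ← Finset.sum_add_distrib]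
            refine Finset.sum_congr rfl fun i _ => ?_
            rw [← Finset.sum_add_distrib, ← Finset.sum_add_distrib]
      _ ≤ 3 * n + 2 * (2 * m) + (∑ i : Fin n, (G.degree i : ℝ) ^ 2 - 2 * m) := by
            rw [e2, e3]
            linarith [e4]
  -- put everything together
  have hn0 : (0:ℝ) < n := by
    have : 0 < n := by omega
    exact_mod_cast this
  rw [hDE]
  have hlin : (3:ℝ)*n*n - 3*n - 2*m - (∑ i : Fin n, (G.degree i : ℝ) ^ 2) ≤
      (n:ℝ) * ∑ k, max (lam k) 0 := by linarith [hub, hcount]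
  have h2 : 3*((n:ℝ)-1) - 2*(m:ℝ)/n - (∑ i : Fin n, (G.degree i : ℝ) ^ 2)/n =
      ((3:ℝ)*n*n - 3*n - 2*m - (∑ i : Fin n, (G.degree i : ℝ) ^ 2))/n := by
    field_simp
  have hq : 3*((n:ℝ)-1) - 2*(m:ℝ)/n - (∑ i : Fin n, (G.degree i : ℝ) ^ 2)/n ≤
      ∑ k, max (lam k) 0 := by
    rw [h2, div_le_iff₀ hn0]
    nlinarith [hlin]
  linarith [hq]
end

section
/- Let G be a connected bipartite graph with p vertices in one partite set and q vertices in the other. Then DE(G) ≥ 2·(p + q − 2 + √(p² + q² − pq)). -/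
open SimpleGraph Finset

open Matrix

lemma aux_sum_eigenvalues_eq_trace {n : ℕ} {A : Matrix (Fin n) (Fin n) ℝ}
    (hA : A.IsHermitian) : ∑ i, hA.eigenvalues i = A.trace := by
  have hU : star (hA.eigenvectorUnitary : Matrix (Fin n) (Fin n) ℝ) *
      (hA.eigenvectorUnitary : Matrix (Fin n) (Fin n) ℝ) = 1 :=
    Matrix.mem_unitaryGroup_iff'.mp hA.eigenvectorUnitary.2
  conv_rhs => rw [hA.spectral_theorem]
  rw [Unitary.conjStarAlgAut_apply, Matrix.trace_mul_cycle, hU, Matrix.one_mul, Matrix.trace_diagonal]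
  simp

lemma aux_rayleigh_s16 {n : ℕ} {A : Matrix (Fin n) (Fin n) ℝ} (hA : A.IsHermitian)
    {μ : ℝ} (hμ : ∀ i, hA.eigenvalues i ≤ μ) (x : Fin n → ℝ) :
    x ⬝ᵥ (A *ᵥ x) ≤ μ * (x ⬝ᵥ x) := by
  set U : Matrix (Fin n) (Fin n) ℝ := (hA.eigenvectorUnitary : Matrix (Fin n) (Fin n) ℝ) with hUdef
  have hU1 : U * star U = 1 := Matrix.mem_unitaryGroup_iff.mp hA.eigenvectorUnitary.2
  have hkey : μ • (1 : Matrix (Fin n) (Fin n) ℝ) - A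
      = U * Matrix.diagonal (fun i => μ - hA.eigenvalues i) * Uᴴ := by
    have hdg : Matrix.diagonal (fun i => μ - hA.eigenvalues i)
        = μ • (1 : Matrix (Fin n) (Fin n) ℝ) - Matrix.diagonal hA.eigenvalues := by
      rw [Matrix.smul_one_eq_diagonal, ← Matrix.diagonal_sub]
    rw [hdg, Matrix.mul_sub, Matrix.sub_mul, ← Matrix.star_eq_conjTranspose]
    have h1 : U * (μ • (1 : Matrix (Fin n) (Fin n) ℝ)) * star U = μ • 1 := by
      rw [Matrix.mul_smul, Matrix.mul_one, Matrix.smul_mul, hU1]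
    have h2 : U * Matrix.diagonal hA.eigenvalues * star U = A := by
      conv_rhs => rw [hA.spectral_theorem]
      congr 2
    rw [h1, h2]
  have hpsd : (μ • (1 : Matrix (Fin n) (Fin n) ℝ) - A).PosSemidef := by
    rw [hkey]
    exact (Matrix.PosSemidef.diagonal (fun i => by simpa using hμ i)).mul_mul_conjTranspose_same U
  have := hpsd.dotProduct_mulVec_nonneg x
  have hstar : star x = x := by simp
  rw [hstar, Matrix.sub_mulVec, dotProduct_sub, Matrix.smul_mulVec,
    Matrix.one_mulVec, dotProduct_smul, smul_eq_mul] at this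
  linarith

lemma aux_sum_ite {n : ℕ} {s : Finset (Fin n)} {i : Fin n} (hi : i ∈ s) (c : ℝ) :
    ∑ j ∈ s, (if i = j then (0:ℝ) else c) = ((s.card : ℝ) - 1) * c := by
  rw [← Finset.add_sum_erase _ _ hi, if_pos rfl, zero_add]
  rw [Finset.sum_congr rfl (fun j hj => if_neg (fun h => (Finset.mem_erase.mp hj).1 h.symm))]
  rw [Finset.sum_const, Finset.card_erase_of_mem hi, nsmul_eq_mul]
  have h1 : 1 ≤ s.card := Finset.card_pos.mpr ⟨i, hi⟩
  push_cast [Nat.cast_sub h1]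
  ring

lemma aux_card_one {n : ℕ} (G : SimpleGraph (Fin n)) (hconn : G.Connected)
    (hno : ∀ x y : Fin n, ¬ G.Adj x y) : n = 1 := by
  have hsub : ∀ u v : Fin n, u = v := by
    intro u v
    obtain ⟨w⟩ := hconn.preconnected u v
    cases w with
    | nil => rfl
    | cons h _ => exact absurd h (hno _ _)
  have hne : Nonempty (Fin n) := hconn.nonempty
  obtain ⟨i⟩ := hne
  have h1 : Fintype.card (Fin n) = 1 := Fintype.card_eq_one_of_forall_eq (fun j => hsub j i)
  simpa using h1

lemma aux_de_nonneg {n : ℕ} (G : SimpleGraph (Fin n)) : 0 ≤ distEnergy G :=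
  Finset.sum_nonneg fun i _ => abs_nonneg _

/-- **Theorem 8.** For a connected bipartite graph `G` with `p` vertices in one partite
set and `q` in the other, `DE(G) ≥ 2(p + q - 2 + √(p² + q² - pq))`. -/
theorem distEnergy_bipartite_lower_bound {n : ℕ} (G : SimpleGraph (Fin n))
    (hconn : G.Connected) (A B : Finset (Fin n)) (p q : ℕ)
    (hdisj : Disjoint A B) (hcover : A ∪ B = Finset.univ)
    (hA : A.card = p) (hB : B.card = q)
    (hbip : ∀ x y : Fin n, G.Adj x y → (x ∈ A ∧ y ∈ B) ∨ (x ∈ B ∧ y ∈ A)) :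
    2 * ((p : ℝ) + (q : ℝ) - 2 +
        Real.sqrt ((p : ℝ) ^ 2 + (q : ℝ) ^ 2 - (p : ℝ) * (q : ℝ))) ≤
      distEnergy G := by
  classical
  haveI hne : Nonempty (Fin n) := hconn.nonempty
  rcases Nat.eq_zero_or_pos p with hp | hp
  · -- A is empty
    subst hp
    have hAe : A = ∅ := Finset.card_eq_zero.mp hA
    have hno : ∀ x y : Fin n, ¬ G.Adj x y := by
      intro x y h
      rcases hbip x y h with ⟨hx, _⟩ | ⟨_, hy⟩
      · simp [hAe] at hx
      · simp [hAe] at hy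
    have hn1 : n = 1 := aux_card_one G hconn hno
    have hq1 : q = 1 := by
      have hBu : B = Finset.univ := by rw [← hcover, hAe, Finset.empty_union]
      rw [← hB, hBu, Finset.card_univ, Fintype.card_fin, hn1]
    subst hq1
    have harg : ((0:ℕ):ℝ) ^ 2 + ((1:ℕ):ℝ) ^ 2 - ((0:ℕ):ℝ) * ((1:ℕ):ℝ) = 1 := by norm_num
    rw [harg, Real.sqrt_one]
    have := aux_de_nonneg G
    norm_num
    linarith
  rcases Nat.eq_zero_or_pos q with hq | hq
  · subst hq
    have hBe : B = ∅ := Finset.card_eq_zero.mp hB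
    have hno : ∀ x y : Fin n, ¬ G.Adj x y := by
      intro x y h
      rcases hbip x y h with ⟨_, hy⟩ | ⟨hx, _⟩
      · simp [hBe] at hy
      · simp [hBe] at hx
    have hn1 : n = 1 := aux_card_one G hconn hno
    have hp1 : p = 1 := by
      have hAu : A = Finset.univ := by rw [← hcover, hBe, Finset.union_empty]
      rw [← hA, hAu, Finset.card_univ, Fintype.card_fin, hn1]
    subst hp1
    have harg : ((1:ℕ):ℝ) ^ 2 + ((0:ℕ):ℝ) ^ 2 - ((1:ℕ):ℝ) * ((0:ℕ):ℝ) = 1 := by norm_num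
    rw [harg, Real.sqrt_one]
    have := aux_de_nonneg G
    norm_num
    linarith
  -- main case : p, q ≥ 1
  have hpR : (1:ℝ) ≤ (p:ℝ) := by exact_mod_cast hp
  have hqR : (1:ℝ) ≤ (q:ℝ) := by exact_mod_cast hq
  set s : ℝ := Real.sqrt ((p : ℝ) ^ 2 + (q : ℝ) ^ 2 - (p : ℝ) * (q : ℝ)) with hsdef
  have hs0 : 0 ≤ s := Real.sqrt_nonneg _
  have hargnn : (0:ℝ) ≤ (p : ℝ) ^ 2 + (q : ℝ) ^ 2 - (p : ℝ) * (q : ℝ) := by nlinarith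
  have hs2 : s ^ 2 = (p : ℝ) ^ 2 + (q : ℝ) ^ 2 - (p : ℝ) * (q : ℝ) := Real.sq_sqrt hargnn
  have hb0 : 0 ≤ (q : ℝ) - (p : ℝ) + s := by nlinarith
  set x : Fin n → ℝ := fun i => if i ∈ A then (q : ℝ) else ((q : ℝ) - (p : ℝ) + s) with hxdef
  set M : Matrix (Fin n) (Fin n) ℝ :=
    fun i j => if i = j then 0 else if (i ∈ A ↔ j ∈ A) then 2 else 1 with hMdef
  have hxnn : ∀ i, 0 ≤ x i := by
    intro i
    rw [hxdef]
    dsimp only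
    split
    · positivity
    · exact hb0
  have hBmem : ∀ i : Fin n, i ∉ A → i ∈ B := by
    intro i hi
    have h := Finset.mem_univ i
    rw [← hcover, Finset.mem_union] at h
    tauto
  have hAnB : ∀ i : Fin n, i ∈ A → i ∉ B := fun i hi => Finset.disjoint_left.mp hdisj hi
  have hMD : ∀ i j, M i j ≤ distMatrix G i j := by
    intro i j
    by_cases hij : i = j
    · subst hij
      simp [hMdef, distMatrix]
    · have hd1 : 0 < G.dist i j := hconn.pos_dist_of_ne hij
      by_cases hside : (i ∈ A ↔ j ∈ A)
      · have hnadj : ¬ G.Adj i j := by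
          intro h
          rcases hbip i j h with ⟨hiA, hjB⟩ | ⟨hiB, hjA⟩
          · exact hAnB j (hside.mp hiA) hjB
          · exact hAnB i (hside.mpr hjA) hiB
        have hd2 : 2 ≤ G.dist i j := by
          have hne1 : G.dist i j ≠ 1 := fun h1 =>
            hnadj (SimpleGraph.dist_eq_one_iff_adj.mp h1)
          omega
        rw [hMdef]
        simp only [if_neg hij, if_pos hside, distMatrix]
        exact_mod_cast hd2
      · rw [hMdef]
        simp only [if_neg hij, if_neg hside, distMatrix]
        exact_mod_cast hd1
  have hMx : ∀ i, (M *ᵥ x) i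
      = ((p : ℝ) + (q : ℝ) - 2 + s) * x i := by
    intro i
    have hsplit : (M *ᵥ x) i = ∑ j ∈ A, M i j * x j + ∑ j ∈ B, M i j * x j := by
      rw [Matrix.mulVec, dotProduct, ← hcover, Finset.sum_union hdisj]
    by_cases hiA : i ∈ A
    · have e1 : ∀ j ∈ A, M i j * x j = (if i = j then (0:ℝ) else 2 * (q:ℝ)) := by
        intro j hj
        have hxj : x j = (q:ℝ) := by simp [hxdef, hj]
        have hMij : M i j = if i = j then 0 else 2 := by simp [hMdef, hj, hiA]
        rw [hxj, hMij]
        split_ifs <;> ring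
      have e2 : ∀ j ∈ B, M i j * x j = (q : ℝ) - (p : ℝ) + s := by
        intro j hj
        have hjA : j ∉ A := Finset.disjoint_right.mp hdisj hj
        have hijne : i ≠ j := fun h => hjA (h ▸ hiA)
        have hxj : x j = (q : ℝ) - (p : ℝ) + s := by simp [hxdef, hjA]
        have hMij : M i j = 1 := by simp [hMdef, hijne, hiA, hjA]
        rw [hxj, hMij, one_mul]
      have h1 : ∑ j ∈ A, M i j * x j = ((p:ℝ) - 1) * (2 * (q:ℝ)) := by
        rw [Finset.sum_congr rfl e1, aux_sum_ite hiA (2 * (q:ℝ)), hA]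
      have h2 : ∑ j ∈ B, M i j * x j = (q:ℝ) * ((q : ℝ) - (p : ℝ) + s) := by
        rw [Finset.sum_congr rfl e2, Finset.sum_const, hB, nsmul_eq_mul]
      have hxi : x i = (q:ℝ) := by simp [hxdef, hiA]
      rw [hsplit, h1, h2, hxi]
      ring
    · have hiB : i ∈ B := hBmem i hiA
      have e1 : ∀ j ∈ A, M i j * x j = (q:ℝ) := by
        intro j hj
        have hijne : i ≠ j := fun h => hiA (h ▸ hj)
        have hxj : x j = (q:ℝ) := by simp [hxdef, hj]
        have hMij : M i j = 1 := by simp [hMdef, hijne, hiA, hj]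
        rw [hxj, hMij, one_mul]
      have e2 : ∀ j ∈ B, M i j * x j
          = (if i = j then (0:ℝ) else 2 * ((q : ℝ) - (p : ℝ) + s)) := by
        intro j hj
        have hjA : j ∉ A := Finset.disjoint_right.mp hdisj hj
        have hxj : x j = (q : ℝ) - (p : ℝ) + s := by simp [hxdef, hjA]
        have hMij : M i j = if i = j then 0 else 2 := by simp [hMdef, hiA, hjA]
        rw [hxj, hMij]
        split_ifs <;> ring
      have h1 : ∑ j ∈ A, M i j * x j = (p:ℝ) * (q:ℝ) := by
        rw [Finset.sum_congr rfl e1, Finset.sum_const, hA, nsmul_eq_mul]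
      have h2 : ∑ j ∈ B, M i j * x j
          = ((q:ℝ) - 1) * (2 * ((q : ℝ) - (p : ℝ) + s)) := by
        rw [Finset.sum_congr rfl e2, aux_sum_ite hiB (2 * ((q : ℝ) - (p : ℝ) + s)), hB]
      have hxi : x i = (q : ℝ) - (p : ℝ) + s := by simp [hxdef, hiA]
      rw [hsplit, h1, h2, hxi]
      linear_combination -hs2
  have hMxx : x ⬝ᵥ (M *ᵥ x) = ((p : ℝ) + (q : ℝ) - 2 + s) * (x ⬝ᵥ x) := by
    simp only [dotProduct]
    rw [Finset.mul_sum]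
    exact Finset.sum_congr rfl fun i _ => by rw [hMx i]; ring
  have hcomp : x ⬝ᵥ (M *ᵥ x) ≤ x ⬝ᵥ (distMatrix G *ᵥ x) := by
    simp only [dotProduct, Matrix.mulVec]
    apply Finset.sum_le_sum
    intro i _
    apply mul_le_mul_of_nonneg_left _ (hxnn i)
    apply Finset.sum_le_sum
    intro j _
    exact mul_le_mul_of_nonneg_right (hMD i j) (hxnn j)
  have hxx : 0 < x ⬝ᵥ x := by
    obtain ⟨i0, hi0⟩ := Finset.card_pos.mp (hA ▸ hp)
    apply Finset.sum_pos' (fun j _ => mul_self_nonneg _)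
    refine ⟨i0, Finset.mem_univ _, ?_⟩
    have : x i0 = (q:ℝ) := by rw [hxdef]; simp [hi0]
    rw [this]
    nlinarith
  obtain ⟨k, -, hk⟩ := Finset.exists_max_image Finset.univ
    (fun i => (distMatrix_isHermitian G).eigenvalues i) Finset.univ_nonempty
  have hray := aux_rayleigh_s16 (distMatrix_isHermitian G)
    (fun i => hk i (Finset.mem_univ i)) x
  have hlam_le : (p : ℝ) + (q : ℝ) - 2 + s ≤ (distMatrix_isHermitian G).eigenvalues k := by
    have h := le_trans (hMxx ▸ hcomp) hray
    exact le_of_mul_le_mul_right (by linarith) hxx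
  have htr : ∑ i, (distMatrix_isHermitian G).eigenvalues i = 0 := by
    rw [aux_sum_eigenvalues_eq_trace]
    simp [Matrix.trace, Matrix.diag, distMatrix, SimpleGraph.dist_self]
  have hDE : 2 * (distMatrix_isHermitian G).eigenvalues k ≤ distEnergy G := by
    unfold distEnergy
    rw [← Finset.add_sum_erase _ _ (Finset.mem_univ k)]
    have hsum : (distMatrix_isHermitian G).eigenvalues k
        + ∑ i ∈ Finset.univ.erase k, (distMatrix_isHermitian G).eigenvalues i = 0 := by
      rw [Finset.add_sum_erase _ _ (Finset.mem_univ k)]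
      exact htr
    have h2 : |(distMatrix_isHermitian G).eigenvalues k|
        ≤ ∑ i ∈ Finset.univ.erase k, |(distMatrix_isHermitian G).eigenvalues i| := by
      calc |(distMatrix_isHermitian G).eigenvalues k|
          = |∑ i ∈ Finset.univ.erase k, (distMatrix_isHermitian G).eigenvalues i| := by
            rw [show ∑ i ∈ Finset.univ.erase k, (distMatrix_isHermitian G).eigenvalues i
              = -(distMatrix_isHermitian G).eigenvalues k by linarith, abs_neg]
        _ ≤ ∑ i ∈ Finset.univ.erase k, |(distMatrix_isHermitian G).eigenvalues i| :=
            Finset.abs_sum_le_sum_abs _ _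
    have h3 := le_abs_self ((distMatrix_isHermitian G).eigenvalues k)
    linarith
  linarith
end

section
/- Let G be a connected graph with n vertices such that the complement graph Ḡ is also connected. Then DE(G) + DE(Ḡ) ≥ 6(n − 1). -/
open SimpleGraph Finset
lemma sum_eig_eq_trace {V : Type*} [Fintype V] [DecidableEq V]
    {A : Matrix V V ℝ} (hA : A.IsHermitian) :
    ∑ i, hA.eigenvalues i = A.trace := by
  conv_rhs => rw [hA.spectral_theorem, Unitary.conjStarAlgAut_apply]
  rw [Matrix.trace_mul_cycle]
  rw [Matrix.mem_unitaryGroup_iff'.mp (hA.eigenvectorUnitary).2]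
  simp [Matrix.trace_diagonal]

lemma entry_eq {V : Type*} [Fintype V] [DecidableEq V]
    {A : Matrix V V ℝ} (hA : A.IsHermitian) (i j : V) :
    A i j = ∑ k, hA.eigenvalues k *
      ((hA.eigenvectorUnitary : Matrix V V ℝ) i k *
       (hA.eigenvectorUnitary : Matrix V V ℝ) j k) := by
  conv_lhs => rw [hA.spectral_theorem, Unitary.conjStarAlgAut_apply]
  rw [Matrix.mul_apply]
  congr 1; ext k
  rw [Matrix.mul_diagonal]
  simp [Matrix.conjTranspose_apply]
  ring

lemma sum_swap3 {V : Type*} [Fintype V] (f : V → V → V → ℝ) :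
    ∑ a, ∑ b, ∑ c, f a b c = ∑ c, ∑ a, ∑ b, f a b c := by
  calc ∑ a, ∑ b, ∑ c, f a b c
      = ∑ a, ∑ c, ∑ b, f a b c := Finset.sum_congr rfl fun a _ => Finset.sum_comm
    _ = ∑ c, ∑ a, ∑ b, f a b c := Finset.sum_comm

lemma sum_entries_le {V : Type*} [Fintype V] [DecidableEq V]
    {A : Matrix V V ℝ} (hA : A.IsHermitian) (k : V)
    (hk : ∀ i, hA.eigenvalues i ≤ hA.eigenvalues k) :
    ∑ i, ∑ j, A i j ≤ (Fintype.card V : ℝ) * hA.eigenvalues k := by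
  set U : Matrix V V ℝ := (hA.eigenvectorUnitary : Matrix V V ℝ) with hUdef
  have hUU : ∀ i j, ∑ m, U i m * U j m = (1 : Matrix V V ℝ) i j := by
    intro i j
    have h1 := congrFun (congrFun (Matrix.mem_unitaryGroup_iff.mp (hA.eigenvectorUnitary).2) i) j
    rw [Matrix.mul_apply] at h1
    simpa [Matrix.conjTranspose_apply, hUdef] using h1
  have key : ∑ i, ∑ j, A i j = ∑ m, hA.eigenvalues m * (∑ i, U i m)^2 := by
    simp_rw [entry_eq hA, sq, Finset.sum_mul_sum, Finset.mul_sum]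
    exact sum_swap3 _
  have claim2 : ∑ m, (∑ i, U i m)^2 = (Fintype.card V : ℝ) := by
    simp_rw [sq, Finset.sum_mul_sum]
    rw [← sum_swap3 (fun i j m => U i m * U j m)]
    simp_rw [hUU]
    simp [Matrix.one_apply]
  rw [key]
  calc ∑ m, hA.eigenvalues m * (∑ i, U i m)^2
      ≤ ∑ m, hA.eigenvalues k * (∑ i, U i m)^2 :=
        Finset.sum_le_sum fun m _ => mul_le_mul_of_nonneg_right (hk m) (sq_nonneg _)
    _ = hA.eigenvalues k * ∑ m, (∑ i, U i m)^2 := by rw [Finset.mul_sum]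
    _ = (Fintype.card V : ℝ) * hA.eigenvalues k := by rw [claim2, mul_comm]

lemma two_eig_le_energy {V : Type*} [Fintype V] [DecidableEq V]
    {A : Matrix V V ℝ} (hA : A.IsHermitian)
    (h0 : ∑ i, hA.eigenvalues i = 0) (k : V) :
    2 * hA.eigenvalues k ≤ ∑ i, |hA.eigenvalues i| := by
  classical
  have h2 : ∑ i ∈ Finset.univ.erase k, hA.eigenvalues i = - hA.eigenvalues k := by
    have := Finset.add_sum_erase Finset.univ hA.eigenvalues (Finset.mem_univ k)
    linarith [this, h0]
  have h1 : |∑ i ∈ Finset.univ.erase k, hA.eigenvalues i|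
      ≤ ∑ i ∈ Finset.univ.erase k, |hA.eigenvalues i| := Finset.abs_sum_le_sum_abs _ _
  rw [h2, abs_neg] at h1
  rw [← Finset.add_sum_erase Finset.univ (fun i => |hA.eigenvalues i|) (Finset.mem_univ k)]
  have := le_abs_self (hA.eigenvalues k)
  linarith

lemma dist_add_dist_compl {V : Type*} (G : SimpleGraph V)
    (hc : G.Connected) (hc' : Gᶜ.Connected) {i j : V} (hij : i ≠ j) :
    3 ≤ G.dist i j + Gᶜ.dist i j := by
  have p1 : 0 < G.dist i j := hc.pos_dist_of_ne hij
  have p2 : 0 < Gᶜ.dist i j := hc'.pos_dist_of_ne hij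
  by_cases h : G.Adj i j
  · have h2 : Gᶜ.dist i j ≠ 1 := by
      intro hh
      exact ((SimpleGraph.dist_eq_one_iff_adj.mp hh).2) h
    omega
  · have h1 : G.dist i j ≠ 1 := fun hh => h (SimpleGraph.dist_eq_one_iff_adj.mp hh)
    omega

/-- **Theorem 9.** For a connected graph `G` on `n` vertices with connected complement,
`DE(G) + DE(Ḡ) ≥ 6(n-1)`. -/
theorem distEnergy_add_distEnergy_compl {n : ℕ} (G : SimpleGraph (Fin n))
    (hconn : G.Connected) (hconn' : Gᶜ.Connected) :
    6 * ((n : ℝ) - 1) ≤ distEnergy G + distEnergy Gᶜ := by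
  have hne : Nonempty (Fin n) := hconn.nonempty
  have hn : 0 < n := Fin.pos_iff_nonempty.mpr hne
  have hnR : (0:ℝ) < n := by exact_mod_cast hn
  have h0 : ∑ i, (distMatrix_isHermitian G).eigenvalues i = 0 := by
    rw [sum_eig_eq_trace]
    simp [Matrix.trace, Matrix.diag, distMatrix, SimpleGraph.dist_self]
  have h0' : ∑ i, (distMatrix_isHermitian Gᶜ).eigenvalues i = 0 := by
    rw [sum_eig_eq_trace]
    simp [Matrix.trace, Matrix.diag, distMatrix, SimpleGraph.dist_self]
  obtain ⟨k, hk⟩ := Finite.exists_max (distMatrix_isHermitian G).eigenvalues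
  obtain ⟨k', hk'⟩ := Finite.exists_max (distMatrix_isHermitian Gᶜ).eigenvalues
  have e1 : ∑ i, ∑ j, distMatrix G i j ≤ (n:ℝ) * (distMatrix_isHermitian G).eigenvalues k := by
    simpa using sum_entries_le (distMatrix_isHermitian G) k hk
  have e1' : ∑ i, ∑ j, distMatrix Gᶜ i j ≤ (n:ℝ) * (distMatrix_isHermitian Gᶜ).eigenvalues k' := by
    simpa using sum_entries_le (distMatrix_isHermitian Gᶜ) k' hk'
  have e2 : 2 * (distMatrix_isHermitian G).eigenvalues k ≤ distEnergy G :=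
    two_eig_le_energy _ h0 k
  have e2' : 2 * (distMatrix_isHermitian Gᶜ).eigenvalues k' ≤ distEnergy Gᶜ :=
    two_eig_le_energy _ h0' k'
  have hrow : ∀ i : Fin n, 3 * ((n:ℝ)-1) ≤ ∑ j, (distMatrix G i j + distMatrix Gᶜ i j) := by
    intro i
    have step : ∑ j, (if j = i then (0:ℝ) else 3)
        ≤ ∑ j, (distMatrix G i j + distMatrix Gᶜ i j) := by
      apply Finset.sum_le_sum
      intro j _
      by_cases hji : j = i
      · simp only [hji, if_pos rfl, distMatrix]
        positivity
      · simp only [if_neg hji, distMatrix]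
        have h3 := dist_add_dist_compl G hconn hconn' (fun h => hji (h ▸ rfl) : i ≠ j)
        exact_mod_cast h3
    have hsum : ∑ j : Fin n, (if j = i then (0:ℝ) else 3) = 3*((n:ℝ)-1) := by
      rw [Finset.sum_ite, Finset.filter_eq', if_pos (Finset.mem_univ i), Finset.filter_ne']
      simp [Finset.card_erase_of_mem, Finset.card_univ]
      rw [Nat.cast_sub hn]
      push_cast
      ring
    linarith
  have hS : 3 * (n:ℝ) * ((n:ℝ)-1)
      ≤ (∑ i, ∑ j, distMatrix G i j) + ∑ i, ∑ j, distMatrix Gᶜ i j := by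
    rw [← Finset.sum_add_distrib]
    simp_rw [← Finset.sum_add_distrib]
    calc 3 * (n:ℝ) * ((n:ℝ)-1) = ∑ _i : Fin n, 3 * ((n:ℝ)-1) := by
          simp [Finset.sum_const]; ring
      _ ≤ _ := Finset.sum_le_sum fun i _ => hrow i
  have key : (n:ℝ) * (6 * ((n:ℝ) - 1)) ≤ (n:ℝ) * (distEnergy G + distEnergy Gᶜ) := by
    nlinarith [e1, e1', e2, e2', hS, hnR]
  exact le_of_mul_le_mul_left key hnR
end

section
/- Let G be a connected graph with n vertices and diameter at most two. Then DE(G) ≤ 2(n − 1) + E(Ḡ), where E(Ḡ) is the (adjacency) energy of the complement of G. -/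
open SimpleGraph Finset

/-- The adjacency matrix of `G`, with real entries. -/
noncomputable def adjMat {V : Type*} [Fintype V] (G : SimpleGraph V) : Matrix V V ℝ :=
  open scoped Classical in fun i j => if G.Adj i j then 1 else 0

lemma adjMat_isHermitian {V : Type*} [Fintype V] (G : SimpleGraph V) :
    (adjMat G).IsHermitian := by
  unfold Matrix.IsHermitian
  ext i j
  simp only [adjMat, Matrix.conjTranspose_apply, RCLike.star_def, starRingEnd_apply,
    star_trivial]
  rw [SimpleGraph.adj_comm]

/-- The (adjacency) energy of a graph: the sum of the absolute values of the
eigenvalues of its adjacency matrix. -/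
noncomputable def graphEnergy {V : Type*} [Fintype V] [DecidableEq V]
    (G : SimpleGraph V) : ℝ :=
  ∑ i, |(adjMat_isHermitian G).eigenvalues i|

lemma psd_diag_nonneg {n : ℕ} {M : Matrix (Fin n) (Fin n) ℝ} (hM : M.PosSemidef) (i : Fin n) :
    0 ≤ M i i := by
  have h := hM.dotProduct_mulVec_nonneg (Pi.single i 1)
  simpa [dotProduct, Matrix.mulVec, Pi.single_apply, mul_ite, ite_mul] using h

/-- Key trace-norm style bound: if `P ± C` are positive semidefinite, then the sum of the
absolute values of the eigenvalues of `C` is at most the trace of `P`. -/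
lemma sum_abs_eigenvalues_le_trace {n : ℕ} {C P : Matrix (Fin n) (Fin n) ℝ}
    (hC : C.IsHermitian) (h1 : (P - C).PosSemidef) (h2 : (P + C).PosSemidef) :
    ∑ i, |hC.eigenvalues i| ≤ P.trace := by
  classical
  set U : Matrix (Fin n) (Fin n) ℝ := (Matrix.IsHermitian.eigenvectorUnitary hC : Matrix (Fin n) (Fin n) ℝ) with hUdef
  have hUmem := (Matrix.IsHermitian.eigenvectorUnitary hC).2
  have hU1 : U * star U = 1 := Matrix.mem_unitaryGroup_iff.mp hUmem
  have hdiag : star U * C * U = Matrix.diagonal hC.eigenvalues := by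
    have h := hC.conjStarAlgAut_star_eigenvectorUnitary
    simp only [Unitary.conjStarAlgAut_star_apply, RCLike.ofReal_real_eq_id, Function.id_comp] at h
    rw [hUdef]
    convert h using 2
  have hCd : ∀ i, (star U * C * U) i i = hC.eigenvalues i := by
    intro i; rw [hdiag, Matrix.diagonal_apply_eq]
  have hsub : ∀ i, 0 ≤ (star U * P * U) i i - hC.eigenvalues i := by
    intro i
    have hpsd : (star U * (P - C) * U).PosSemidef := by
      have := h1.conjTranspose_mul_mul_same U
      rwa [Matrix.star_eq_conjTranspose]
    have h0 := psd_diag_nonneg hpsd i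
    have : star U * (P - C) * U = star U * P * U - star U * C * U := by
      rw [Matrix.mul_sub, Matrix.sub_mul]
    rw [this, Matrix.sub_apply, hCd] at h0
    linarith
  have hadd : ∀ i, 0 ≤ (star U * P * U) i i + hC.eigenvalues i := by
    intro i
    have hpsd : (star U * (P + C) * U).PosSemidef := by
      have := h2.conjTranspose_mul_mul_same U
      rwa [Matrix.star_eq_conjTranspose]
    have h0 := psd_diag_nonneg hpsd i
    have : star U * (P + C) * U = star U * P * U + star U * C * U := by
      rw [Matrix.mul_add, Matrix.add_mul]
    rw [this, Matrix.add_apply, hCd] at h0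
    linarith
  calc ∑ i, |hC.eigenvalues i| ≤ ∑ i, (star U * P * U) i i := by
        refine Finset.sum_le_sum fun i _ => ?_
        exact abs_le.mpr ⟨by have := hadd i; linarith, by have := hsub i; linarith⟩
    _ = (star U * P * U).trace := by rw [Matrix.trace]; rfl
    _ = P.trace := by
        rw [Matrix.trace_mul_comm, ← Matrix.mul_assoc, hU1, Matrix.one_mul]

/-- For a Hermitian real matrix `B` there is a matrix `Q` with `Q ± B` positive semidefinite
whose trace is the sum of the absolute values of the eigenvalues of `B`. -/
lemma exists_abs_companion {n : ℕ} {B : Matrix (Fin n) (Fin n) ℝ} (hB : B.IsHermitian) :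
    ∃ Q : Matrix (Fin n) (Fin n) ℝ, (Q - B).PosSemidef ∧ (Q + B).PosSemidef ∧
      Q.trace = ∑ i, |hB.eigenvalues i| := by
  classical
  set U : Matrix (Fin n) (Fin n) ℝ := (Matrix.IsHermitian.eigenvectorUnitary hB : Matrix (Fin n) (Fin n) ℝ) with hUdef
  have hUmem := (Matrix.IsHermitian.eigenvectorUnitary hB).2
  have hU1' : star U * U = 1 := Matrix.mem_unitaryGroup_iff'.mp hUmem
  have hBspec : B = U * Matrix.diagonal hB.eigenvalues * star U := by
    have h := hB.spectral_theorem
    simp only [Unitary.conjStarAlgAut_apply, RCLike.ofReal_real_eq_id, Function.id_comp] at h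
    rw [hUdef]
    convert h using 2
  refine ⟨U * Matrix.diagonal (fun i => |hB.eigenvalues i|) * star U, ?_, ?_, ?_⟩
  · have : U * Matrix.diagonal (fun i => |hB.eigenvalues i|) * star U - B
        = U * Matrix.diagonal (fun i => |hB.eigenvalues i| - hB.eigenvalues i) * star U := by
      rw [show (Matrix.diagonal (fun i => |hB.eigenvalues i| - hB.eigenvalues i))
          = Matrix.diagonal (fun i => |hB.eigenvalues i|) - Matrix.diagonal hB.eigenvalues by
        ext i j; by_cases h : i = j <;> simp [h]]
      rw [Matrix.mul_sub, Matrix.sub_mul, ← hBspec]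
    rw [this]
    have hd : (Matrix.diagonal (fun i => |hB.eigenvalues i| - hB.eigenvalues i)).PosSemidef :=
      Matrix.PosSemidef.diagonal fun i => by
        simp only [Pi.zero_apply, sub_nonneg]; exact le_abs_self _
    have := hd.mul_mul_conjTranspose_same U
    rwa [Matrix.star_eq_conjTranspose]
  · have : U * Matrix.diagonal (fun i => |hB.eigenvalues i|) * star U + B
        = U * Matrix.diagonal (fun i => |hB.eigenvalues i| + hB.eigenvalues i) * star U := by
      rw [show (Matrix.diagonal (fun i => |hB.eigenvalues i| + hB.eigenvalues i))
          = Matrix.diagonal (fun i => |hB.eigenvalues i|) + Matrix.diagonal hB.eigenvalues by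
        ext i j; by_cases h : i = j <;> simp [h]]
      rw [Matrix.mul_add, Matrix.add_mul, ← hBspec]
    rw [this]
    have hd : (Matrix.diagonal (fun i => |hB.eigenvalues i| + hB.eigenvalues i)).PosSemidef :=
      Matrix.PosSemidef.diagonal fun i => by
        have := neg_abs_le (hB.eigenvalues i)
        simp only [Pi.zero_apply]; linarith
    have := hd.mul_mul_conjTranspose_same U
    rwa [Matrix.star_eq_conjTranspose]
  · rw [Matrix.trace_mul_comm, ← Matrix.mul_assoc, hU1', Matrix.one_mul, Matrix.trace_diagonal]

/-- **Theorem 11.** For a connected graph `G` on `n` vertices of diameter at most two,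
`DE(G) ≤ 2(n-1) + E(Ḡ)`. -/
theorem distEnergy_le_compl_energy {n : ℕ} (G : SimpleGraph (Fin n))
    (hconn : G.Connected) (hdiam : ∀ x y : Fin n, G.dist x y ≤ 2) :
    distEnergy G ≤ 2 * ((n : ℝ) - 1) + graphEnergy Gᶜ := by
  classical
  have hn : 0 < n := by
    obtain ⟨x⟩ := hconn.nonempty
    exact x.pos
  have hnR : (0:ℝ) < n := by exact_mod_cast hn
  have hnR1 : (1:ℝ) ≤ n := by exact_mod_cast hn
  -- the "all ones minus identity" matrix and its trace-norm companion
  set M : Matrix (Fin n) (Fin n) ℝ := Matrix.of fun i j => if i = j then (0:ℝ) else 1 with hMdef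
  set P : Matrix (Fin n) (Fin n) ℝ :=
    Matrix.of fun i j => (if i = j then (1:ℝ) else 0) + (1 - 2 / n) with hPdef
  -- distance matrix decomposition: D = (J - I) + A(Gᶜ)
  have hD : distMatrix G = M + adjMat Gᶜ := by
    ext i j
    simp only [Matrix.add_apply, distMatrix, hMdef, Matrix.of_apply, adjMat]
    by_cases h : i = j
    · subst h; simp
    · by_cases hadj : G.Adj i j
      · have h1 : G.dist i j = 1 := SimpleGraph.dist_eq_one_iff_adj.mpr hadj
        have hc : ¬ Gᶜ.Adj i j := by simp [SimpleGraph.compl_adj]; tauto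
        rw [h1, if_neg h, if_neg hc]
        norm_num
      · have hge : 0 < G.dist i j := hconn.pos_dist_of_ne h
        have hne1 : G.dist i j ≠ 1 := fun hc => hadj (SimpleGraph.dist_eq_one_iff_adj.mp hc)
        have h2 : G.dist i j = 2 := by have := hdiam i j; omega
        have hc : Gᶜ.Adj i j := by simp [SimpleGraph.compl_adj]; exact ⟨h, hadj⟩
        rw [h2, if_neg h, if_pos hc]
        norm_num
  -- P - M is positive semidefinite
  have hPM1 : (P - M).PosSemidef := by
    have hform : P - M = Matrix.of fun i j => (if i = j then (2:ℝ) else 0) - 2 / n := by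
      ext i j
      by_cases h : i = j <;> simp [hPdef, hMdef, h] <;> ring
    rw [hform]
    refine Matrix.PosSemidef.of_dotProduct_mulVec_nonneg ?_ ?_
    · ext i j
      by_cases h : i = j <;> simp [Matrix.conjTranspose_apply, h, eq_comm]
    · intro x
      have hrow : ∀ j, (∑ k, ((if j = k then (2:ℝ) else 0) - 2 / n) * x k)
          = 2 * x j - 2 / n * ∑ k, x k := by
        intro j
        simp only [sub_mul, Finset.sum_sub_distrib, ite_mul, zero_mul, Finset.sum_ite_eq,
          Finset.mem_univ, if_true, ← Finset.mul_sum]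
      have hform2 : dotProduct (star x)
          ((Matrix.of fun i j => (if i = j then (2:ℝ) else 0) - 2 / n).mulVec x)
          = 2 * (∑ j, x j ^ 2) - 2 / n * (∑ j, x j) ^ 2 := by
        simp only [star_trivial, dotProduct, Matrix.mulVec, Matrix.of_apply, hrow]
        have : ∀ j, x j * (2 * x j - 2 / n * ∑ k, x k)
            = 2 * x j ^ 2 - (2 / n * ∑ k, x k) * x j := fun j => by ring
        simp only [this, Finset.sum_sub_distrib, ← Finset.mul_sum]
        ring
      rw [hform2]
      have hcheb : (∑ j, x j) ^ 2 ≤ (n : ℝ) * ∑ j, x j ^ 2 := by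
        have := sq_sum_le_card_mul_sum_sq (s := (Finset.univ : Finset (Fin n))) (f := x)
        simpa using this
      have h2n : 2 / (n:ℝ) * (∑ j, x j) ^ 2 ≤ 2 * ∑ j, x j ^ 2 := by
        rw [div_mul_eq_mul_div, div_le_iff₀ hnR]
        nlinarith
      linarith
  -- P + M is positive semidefinite
  have hPM2 : (P + M).PosSemidef := by
    have hform : P + M = Matrix.of fun _ _ => 2 - 2 / (n:ℝ) := by
      ext i j
      by_cases h : i = j <;> simp [hPdef, hMdef, h] <;> ring
    rw [hform]
    refine Matrix.PosSemidef.of_dotProduct_mulVec_nonneg ?_ ?_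
    · ext i j; simp [Matrix.conjTranspose_apply]
    · intro x
      have hform2 : dotProduct (star x)
          ((Matrix.of fun _ _ : Fin n => 2 - 2 / (n:ℝ)).mulVec x)
          = (2 - 2 / (n:ℝ)) * (∑ j, x j) ^ 2 := by
        simp only [star_trivial, dotProduct, Matrix.mulVec, Matrix.of_apply,
          ← Finset.mul_sum]
        rw [← Finset.sum_mul]
        ring
      rw [hform2]
      have hc : (0:ℝ) ≤ 2 - 2 / n := by
        have : 2 / (n:ℝ) ≤ 2 := by
          rw [div_le_iff₀ hnR]
          nlinarith [hnR1]
        linarith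
      positivity
  obtain ⟨Q, hQ1, hQ2, hQtr⟩ := exists_abs_companion (adjMat_isHermitian Gᶜ)
  have h1 : (P + Q - distMatrix G).PosSemidef := by
    rw [hD, show P + Q - (M + adjMat Gᶜ) = (P - M) + (Q - adjMat Gᶜ) by abel]
    exact hPM1.add hQ1
  have h2 : (P + Q + distMatrix G).PosSemidef := by
    rw [hD, show P + Q + (M + adjMat Gᶜ) = (P + M) + (Q + adjMat Gᶜ) by abel]
    exact hPM2.add hQ2
  have hmain := sum_abs_eigenvalues_le_trace (distMatrix_isHermitian G) h1 h2
  rw [Matrix.trace_add, hQtr] at hmain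
  have hPtr : P.trace = 2 * ((n:ℝ) - 1) := by
    simp only [Matrix.trace, Matrix.diag, hPdef, Matrix.of_apply, if_pos rfl, eq_self_iff_true, if_true,
      Finset.sum_const, Finset.card_univ, Fintype.card_fin, nsmul_eq_mul]
    field_simp
    ring
  rw [hPtr] at hmain
  exact hmain
end

section
/- Let G be a connected bipartite graph with bipartition of sizes p and q, p + q = n. Then ρ(G) ≥ n − 2 + √(n² − 3pq), with equality if and only if G is the complete bipartite graph K_{p,q}. -/
open SimpleGraph Finset

section Aux

open Matrix

variable {n : ℕ} {M : Matrix (Fin n) (Fin n) ℝ}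

lemma aux_quad_eq_sum (hM : M.IsHermitian) (x : Fin n → ℝ) :
    x ⬝ᵥ (M *ᵥ x) = ∑ i, hM.eigenvalues i *
      ((star (hM.eigenvectorUnitary : Matrix (Fin n) (Fin n) ℝ) *ᵥ x) i)^2 := by
  set U := (hM.eigenvectorUnitary : Matrix (Fin n) (Fin n) ℝ) with hU
  set y := star U *ᵥ x with hy
  have hd : diagonal (RCLike.ofReal ∘ hM.eigenvalues) = diagonal hM.eigenvalues := by
    congr 1
  have h1 : M *ᵥ x = U *ᵥ (diagonal hM.eigenvalues *ᵥ y) := by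
    conv_lhs => rw [hM.spectral_theorem]; simp only [Unitary.conjStarAlgAut_apply, Unitary.coe_star]
    rw [← hU, hd, ← mulVec_mulVec, ← mulVec_mulVec, hy]
  have h2 : x ᵥ* U = y := by
    rw [hy]
    ext i
    simp [vecMul, mulVec, dotProduct, star, mul_comm]
  rw [h1, dotProduct_mulVec x U, h2]
  simp [dotProduct, mulVec_diagonal]
  exact Finset.sum_congr rfl (fun i _ => by ring)

lemma aux_norm_y_eq (hM : M.IsHermitian) (x : Fin n → ℝ) :
    (star (hM.eigenvectorUnitary : Matrix (Fin n) (Fin n) ℝ) *ᵥ x) ⬝ᵥ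
      (star (hM.eigenvectorUnitary : Matrix (Fin n) (Fin n) ℝ) *ᵥ x) = x ⬝ᵥ x := by
  set U := (hM.eigenvectorUnitary : Matrix (Fin n) (Fin n) ℝ) with hU
  have hUU : U * star U = 1 := (Matrix.mem_unitaryGroup_iff).mp hM.eigenvectorUnitary.2
  calc (star U *ᵥ x) ⬝ᵥ (star U *ᵥ x) = (star U *ᵥ x) ᵥ* star U ⬝ᵥ x := by
        rw [dotProduct_mulVec]
      _ = (U *ᵥ (star U *ᵥ x)) ⬝ᵥ x := by
        congr 1
        ext i
        simp [vecMul, mulVec, dotProduct, star, mul_comm]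
      _ = x ⬝ᵥ x := by rw [mulVec_mulVec, hUU, one_mulVec]

lemma aux_rayleigh_le_iSup (hM : M.IsHermitian) (x : Fin n → ℝ) :
    x ⬝ᵥ (M *ᵥ x) ≤ (⨆ i, hM.eigenvalues i) * (x ⬝ᵥ x) := by
  rw [aux_quad_eq_sum hM x, ← aux_norm_y_eq hM x]
  set y := star (hM.eigenvectorUnitary : Matrix (Fin n) (Fin n) ℝ) *ᵥ x
  have : y ⬝ᵥ y = ∑ i, (y i)^2 := by simp [dotProduct, sq]
  rw [this, Finset.mul_sum]
  refine Finset.sum_le_sum fun i _ => ?_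
  have h1 : hM.eigenvalues i ≤ ⨆ j, hM.eigenvalues j :=
    le_ciSup (Set.Finite.bddAbove (Set.finite_range _)) i
  nlinarith [sq_nonneg (y i)]

lemma aux_eigenvalue_le_of_rayleigh (hM : M.IsHermitian) (c : ℝ)
    (h : ∀ x : Fin n → ℝ, x ⬝ᵥ (M *ᵥ x) ≤ c * (x ⬝ᵥ x)) (i : Fin n) :
    hM.eigenvalues i ≤ c := by
  have he := hM.eigenvalues_eq i
  set v : Fin n → ℝ := ⇑(hM.eigenvectorBasis i) with hv
  have hsv : star v = v := by ext j; simp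
  have hnorm : v ⬝ᵥ v = 1 := by
    have h1 := hM.eigenvectorBasis.orthonormal.1 i
    have h2 : (inner ℝ (hM.eigenvectorBasis i) (hM.eigenvectorBasis i) : ℝ) = 1 := by
      rw [real_inner_self_eq_norm_mul_norm, h1]; ring
    rw [← h2]
    simp [PiLp.inner_apply, dotProduct, mul_comm]
    rw [← h2]; simp only [PiLp.inner_apply, RCLike.inner_apply, conj_trivial]
    rfl
  have : hM.eigenvalues i = v ⬝ᵥ (M *ᵥ v) := by
    rw [he, hsv]; simp
  rw [this]
  calc v ⬝ᵥ (M *ᵥ v) ≤ c * (v ⬝ᵥ v) := h v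
    _ = c := by rw [hnorm, mul_one]

lemma aux_eigenvalue_ge_of_rayleigh (hM : M.IsHermitian) (c : ℝ)
    (h : ∀ x : Fin n → ℝ, c * (x ⬝ᵥ x) ≤ x ⬝ᵥ (M *ᵥ x)) (i : Fin n) :
    c ≤ hM.eigenvalues i := by
  have he := hM.eigenvalues_eq i
  set v : Fin n → ℝ := ⇑(hM.eigenvectorBasis i) with hv
  have hsv : star v = v := by ext j; simp
  have hnorm : v ⬝ᵥ v = 1 := by
    have h1 := hM.eigenvectorBasis.orthonormal.1 i
    have h2 : (inner ℝ (hM.eigenvectorBasis i) (hM.eigenvectorBasis i) : ℝ) = 1 := by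
      rw [real_inner_self_eq_norm_mul_norm, h1]; ring
    rw [← h2]
    simp [PiLp.inner_apply, dotProduct, mul_comm]
    rw [← h2]; simp only [PiLp.inner_apply, RCLike.inner_apply, conj_trivial]
    rfl
  have hval : hM.eigenvalues i = v ⬝ᵥ (M *ᵥ v) := by
    rw [he, hsv]; simp
  rw [hval]
  calc c = c * (v ⬝ᵥ v) := by rw [hnorm, mul_one]
    _ ≤ v ⬝ᵥ (M *ᵥ v) := h v

lemma aux_quad_split (A B : Finset (Fin n)) (hdisj : Disjoint A B)
    (hcover : A ∪ B = Finset.univ) (x : Fin n → ℝ) :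
    x ⬝ᵥ ((fun i j => 2 - (if (i ∈ A ∧ j ∈ B) ∨ (i ∈ B ∧ j ∈ A) then (1:ℝ) else 0)
        - (if i = j then 2 else 0) : Matrix (Fin n) (Fin n) ℝ) *ᵥ x)
      = 2 * (∑ i ∈ A, x i + ∑ i ∈ B, x i)^2 - 2 * (∑ i ∈ A, x i) * (∑ i ∈ B, x i)
        - 2 * ∑ i, (x i)^2 := by
  have hB : ∀ z : Fin n, z ∈ B ↔ ¬ z ∈ A := by
    intro z
    constructor
    · intro hz hz'; exact (Finset.disjoint_left.mp hdisj) hz' hz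
    · intro hz
      have : z ∈ A ∪ B := by rw [hcover]; exact Finset.mem_univ z
      rcases Finset.mem_union.mp this with h | h
      · exact absurd h hz
      · exact h
  have expand : x ⬝ᵥ ((fun i j => 2 - (if (i ∈ A ∧ j ∈ B) ∨ (i ∈ B ∧ j ∈ A) then (1:ℝ) else 0)
        - (if i = j then 2 else 0) : Matrix (Fin n) (Fin n) ℝ) *ᵥ x)
      = ∑ i, ∑ j, (2 * (x i * x j)
          - ((if i ∈ A then x i else 0) * (if j ∈ B then x j else 0)
             + (if i ∈ B then x i else 0) * (if j ∈ A then x j else 0))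
          - (if i = j then 2 * (x i * x j) else 0)) := by
    simp only [dotProduct, Matrix.mulVec]
    refine Finset.sum_congr rfl fun i _ => ?_
    rw [Finset.mul_sum]
    refine Finset.sum_congr rfl fun j _ => ?_
    by_cases hiA : i ∈ A <;> by_cases hjA : j ∈ A <;>
      by_cases hij : i = j <;>
      simp [hiA, hjA, hij, (hB i), (hB j)] <;> ring
  rw [expand]
  simp only [Finset.sum_sub_distrib, Finset.sum_add_distrib]
  have h1 : ∑ i : Fin n, ∑ j : Fin n, 2 * (x i * x j)
      = 2 * (∑ i ∈ A, x i + ∑ i ∈ B, x i)^2 := by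
    have : ∑ i : Fin n, x i = ∑ i ∈ A, x i + ∑ i ∈ B, x i := by
      rw [← Finset.sum_union hdisj, hcover]
    calc ∑ i : Fin n, ∑ j : Fin n, 2 * (x i * x j)
        = 2 * ((∑ i : Fin n, x i) * (∑ j : Fin n, x j)) := by
          rw [Finset.sum_mul_sum]
          rw [Finset.mul_sum]
          refine Finset.sum_congr rfl fun i _ => ?_
          rw [Finset.mul_sum]
      _ = 2 * (∑ i ∈ A, x i + ∑ i ∈ B, x i)^2 := by rw [this]; ring
  have hifA : ∑ i : Fin n, (if i ∈ A then x i else 0) = ∑ i ∈ A, x i := by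
    rw [Finset.sum_ite_mem, Finset.univ_inter]
  have hifB : ∑ i : Fin n, (if i ∈ B then x i else 0) = ∑ i ∈ B, x i := by
    rw [Finset.sum_ite_mem, Finset.univ_inter]
  have h2a : ∑ i : Fin n, ∑ j : Fin n,
      ((if i ∈ A then x i else 0) * (if j ∈ B then x j else 0))
      = (∑ i ∈ A, x i) * (∑ i ∈ B, x i) := by
    rw [← Finset.sum_mul_sum, hifA, hifB]
  have h2b : ∑ i : Fin n, ∑ j : Fin n,
      ((if i ∈ B then x i else 0) * (if j ∈ A then x j else 0))
      = (∑ i ∈ B, x i) * (∑ i ∈ A, x i) := by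
    rw [← Finset.sum_mul_sum, hifA, hifB]
  have h3 : ∑ i : Fin n, ∑ j : Fin n, (if i = j then 2 * (x i * x j) else 0)
      = 2 * ∑ i, (x i)^2 := by
    rw [Finset.mul_sum]
    refine Finset.sum_congr rfl fun i _ => ?_
    rw [Finset.sum_ite_eq]
    simp [sq]
  rw [h1, h2a, h2b, h3]
  ring

lemma aux_walk_parity {G : SimpleGraph (Fin n)} {A B : Finset (Fin n)}
    (hdisj : Disjoint A B) (hcover : A ∪ B = Finset.univ)
    (hbip : ∀ x y : Fin n, G.Adj x y → (x ∈ A ∧ y ∈ B) ∨ (x ∈ B ∧ y ∈ A))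
    {x y : Fin n} (w : G.Walk x y) : ((x ∈ A) ↔ (y ∈ A)) ↔ Even w.length := by
  have hB : ∀ z : Fin n, z ∈ B ↔ ¬ z ∈ A := by
    intro z
    constructor
    · intro hz hz'; exact (Finset.disjoint_left.mp hdisj) hz' hz
    · intro hz
      have : z ∈ A ∪ B := by rw [hcover]; exact Finset.mem_univ z
      rcases Finset.mem_union.mp this with h | h
      · exact absurd h hz
      · exact h
  induction w with
  | nil => simp
  | @cons u v y h w ih =>
    have hop : (u ∈ A) ↔ ¬ (v ∈ A) := by
      rcases hbip u v h with ⟨h1, h2⟩ | ⟨h1, h2⟩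
      · exact ⟨fun _ => (hB v).mp h2, fun _ => h1⟩
      · exact ⟨fun hu => absurd hu ((hB u).mp h1), fun hv => absurd h2 hv⟩
    simp only [SimpleGraph.Walk.length_cons, Nat.even_add_one, ← ih]
    tauto

end Aux

open Matrix

set_option maxHeartbeats 1000000 in
/-- For a connected bipartite graph `G` with bipartition of sizes `p` and `q`,
`p + q = n`, we have `ρ(G) ≥ n - 2 + √(n² - 3pq)`, with equality if and only if
`G` is the complete bipartite graph `K_{p,q}`. -/
theorem distSpectralRadius_ge_completeBipartite {n : ℕ} (G : SimpleGraph (Fin n))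
    (hconn : G.Connected) (A B : Finset (Fin n)) (p q : ℕ)
    (hdisj : Disjoint A B) (hcover : A ∪ B = Finset.univ)
    (hA : A.card = p) (hB : B.card = q) (hpq : p + q = n)
    (hbip : ∀ x y : Fin n, G.Adj x y → (x ∈ A ∧ y ∈ B) ∨ (x ∈ B ∧ y ∈ A)) :
    (n : ℝ) - 2 + Real.sqrt ((n : ℝ) ^ 2 - 3 * (p : ℝ) * (q : ℝ)) ≤
      distSpectralRadius G ∧
    (distSpectralRadius G = (n : ℝ) - 2 + Real.sqrt ((n : ℝ) ^ 2 - 3 * (p : ℝ) * (q : ℝ)) ↔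
      ∀ x y : Fin n, G.Adj x y ↔ (x ∈ A ∧ y ∈ B) ∨ (x ∈ B ∧ y ∈ A)) := by
  classical
  haveI hne : Nonempty (Fin n) := hconn.nonempty
  have hn0 : n ≠ 0 := by
    rintro rfl
    exact (Fin.elim0 hne.some)
  have hB' : ∀ z : Fin n, z ∈ B ↔ ¬ z ∈ A := by
    intro z
    constructor
    · intro hz hz'; exact (Finset.disjoint_left.mp hdisj) hz' hz
    · intro hz
      have : z ∈ A ∪ B := by rw [hcover]; exact Finset.mem_univ z
      rcases Finset.mem_union.mp this with h | h
      · exact absurd h hz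
      · exact h
  by_cases hdeg : p = 0 ∨ q = 0
  · -- degenerate case : one side is empty, so G has no edges and n = 1
    have hempty : A = ∅ ∨ B = ∅ := by
      rcases hdeg with h | h
      · left; exact Finset.card_eq_zero.mp (by rw [hA, h])
      · right; exact Finset.card_eq_zero.mp (by rw [hB, h])
    have hno : ∀ x y : Fin n, ¬ G.Adj x y := by
      intro x y hxy
      rcases hbip x y hxy with ⟨h1, h2⟩ | ⟨h1, h2⟩ <;>
        rcases hempty with he | he <;> subst he <;> simp_all
    have hsub : ∀ x y : Fin n, x = y := by
      intro x y
      obtain ⟨w⟩ := hconn.preconnected x y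
      cases w with
      | nil => rfl
      | cons h _ => exact absurd h (hno _ _)
    have hn1 : n = 1 := by
      by_contra hn1
      have h2 : 2 ≤ n := by omega
      have : (⟨0, by omega⟩ : Fin n) = ⟨1, by omega⟩ := hsub _ _
      simp [Fin.ext_iff] at this
    have hzero : distMatrix G = 0 := by
      ext i j
      have : i = j := hsub i j
      subst this
      simp [distMatrix]
    have heig : ∀ i, (distMatrix_isHermitian G).eigenvalues i = 0 := by
      intro i
      have hz : ∀ x : Fin n → ℝ, x ⬝ᵥ (distMatrix G *ᵥ x) = 0 := by
        intro x; rw [hzero]; simp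
      have h1 := aux_eigenvalue_le_of_rayleigh (distMatrix_isHermitian G) 0
        (fun x => by rw [hz x]; simp) i
      have h2 := aux_eigenvalue_ge_of_rayleigh (distMatrix_isHermitian G) 0
        (fun x => by rw [hz x]; simp) i
      linarith
    have hrho : distSpectralRadius G = 0 := by
      unfold distSpectralRadius
      simp only [heig]
      exact ciSup_const
    have hpq0 : (p : ℝ) * q = 0 := by
      rcases hdeg with h | h <;> simp [h]
    have hr0 : (n : ℝ) - 2 + Real.sqrt ((n : ℝ) ^ 2 - 3 * (p : ℝ) * (q : ℝ)) = 0 := by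
      subst hn1
      rw [show ((1:ℕ):ℝ) ^ 2 - 3 * (p:ℝ) * q = 1 by push_cast; linear_combination (-3:ℝ) * hpq0]
      norm_num
    refine ⟨by rw [hrho, hr0], ?_, ?_⟩
    · intro _ x y
      constructor
      · intro h; exact absurd h (hno x y)
      · rintro (⟨h1, h2⟩ | ⟨h1, h2⟩) <;> rcases hempty with he | he <;> subst he <;>
          first
            | exact absurd h1 (Finset.notMem_empty _)
            | exact absurd h2 (Finset.notMem_empty _)
    · intro _
      rw [hrho, hr0]
  · -- main case : both parts nonempty
    push_neg at hdeg
    obtain ⟨hp0, hq0⟩ := hdeg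
    have hp1 : (1:ℝ) ≤ (p:ℝ) := by exact_mod_cast Nat.one_le_iff_ne_zero.mpr hp0
    have hq1 : (1:ℝ) ≤ (q:ℝ) := by exact_mod_cast Nat.one_le_iff_ne_zero.mpr hq0
    have hncast : (n:ℝ) = (p:ℝ) + q := by
      rw [← hpq]; push_cast; ring
    set s := Real.sqrt ((n : ℝ) ^ 2 - 3 * (p : ℝ) * (q : ℝ)) with hs_def
    have hpq1 : (1:ℝ) ≤ (p:ℝ) * q := by
      have := mul_le_mul hp1 hq1 (by norm_num) (by linarith)
      linarith
    have hsq_arg : (0:ℝ) ≤ (n:ℝ)^2 - 3*(p:ℝ)*q := by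
      rw [hncast]
      have h0 := sq_nonneg ((p:ℝ) - q)
      have h1 : ((p:ℝ)-q)^2 = (p:ℝ)^2 - 2*((p:ℝ)*q) + (q:ℝ)^2 := by ring
      have h2 : ((p:ℝ)+q)^2 - 3*((p:ℝ)*q) = (p:ℝ)^2 - ((p:ℝ)*q) + (q:ℝ)^2 := by ring
      linarith
    have hs2 : s^2 = ((p:ℝ)+q)^2 - 3*(p:ℝ)*q := by
      rw [hs_def, Real.sq_sqrt hsq_arg, hncast]
    have hs0 : 0 ≤ s := Real.sqrt_nonneg _
    have hdiffsq : ((p:ℝ)-q)^2 < s^2 := by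
      rw [hs2]
      have h1 : ((p:ℝ)-q)^2 = (p:ℝ)^2 - 2*((p:ℝ)*q) + (q:ℝ)^2 := by ring
      have h2 : ((p:ℝ)+q)^2 - 3*((p:ℝ)*q) = (p:ℝ)^2 - ((p:ℝ)*q) + (q:ℝ)^2 := by ring
      linarith
    have hbeta : 0 < (p:ℝ) - q + s := by
      by_contra hcon
      push_neg at hcon
      have h3 : s ≤ (q:ℝ) - p := by linarith
      have h4 : s^2 ≤ ((q:ℝ)-p)^2 := by
        have := pow_le_pow_left₀ hs0 h3 2
        linarith [this]
      have h5 : ((q:ℝ)-p)^2 = ((p:ℝ)-q)^2 := by ring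
      linarith
    have halpha : 0 < (q:ℝ) - p + s := by
      by_contra hcon
      push_neg at hcon
      have h3 : s ≤ (p:ℝ) - q := by linarith
      have h4 : s^2 ≤ ((p:ℝ)-q)^2 := by
        have := pow_le_pow_left₀ hs0 h3 2
        linarith [this]
      linarith
    have hspos : 0 < s := by linarith [halpha, hbeta]
    set a := Real.sqrt ((q:ℝ) * ((p:ℝ) - q + s)) with ha_def
    set b := Real.sqrt ((p:ℝ) * ((q:ℝ) - p + s)) with hb_def
    have ha2 : a^2 = (q:ℝ) * ((p:ℝ) - q + s) := by
      rw [ha_def]; exact Real.sq_sqrt (by positivity)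
    have hb2 : b^2 = (p:ℝ) * ((q:ℝ) - p + s) := by
      rw [hb_def]; exact Real.sq_sqrt (by positivity)
    have hapos : 0 < a := by rw [ha_def]; exact Real.sqrt_pos.mpr (by positivity)
    have hbpos : 0 < b := by rw [hb_def]; exact Real.sqrt_pos.mpr (by positivity)
    have hab : a * b = (p:ℝ) * q := by
      rw [ha_def, hb_def, ← Real.sqrt_mul (by positivity)]
      rw [show (q:ℝ) * ((p:ℝ) - q + s) * ((p:ℝ) * ((q:ℝ) - p + s)) = ((p:ℝ)*q)^2 from by
        linear_combination ((p:ℝ)*q) * hs2]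
      exact Real.sqrt_sq (by positivity)
    set x₀ := (fun i => if i ∈ A then a else b : Fin n → ℝ) with hx₀
    set M₀ := (fun i j =>
      2 - (if (i ∈ A ∧ j ∈ B) ∨ (i ∈ B ∧ j ∈ A) then (1:ℝ) else 0)
        - (if i = j then 2 else 0) : Matrix (Fin n) (Fin n) ℝ) with hM₀
    have hx₀nonneg : ∀ i, 0 ≤ x₀ i := by
      intro i
      by_cases h : i ∈ A <;> simp [hx₀, h, le_of_lt hapos, le_of_lt hbpos]
    have hSA : ∑ i ∈ A, x₀ i = p * a := by
      rw [Finset.sum_congr rfl (fun i hi => by simp [hx₀, hi] : ∀ i ∈ A, x₀ i = a)]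
      rw [Finset.sum_const, hA, nsmul_eq_mul]
    have hSB : ∑ i ∈ B, x₀ i = q * b := by
      rw [Finset.sum_congr rfl (fun i hi => by simp [hx₀, (hB' i).mp hi] : ∀ i ∈ B, x₀ i = b)]
      rw [Finset.sum_const, hB, nsmul_eq_mul]
    have hQ : ∑ i, (x₀ i)^2 = p * a^2 + q * b^2 := by
      calc ∑ i, (x₀ i)^2 = ∑ i ∈ A ∪ B, (x₀ i)^2 := by rw [hcover]
        _ = ∑ i ∈ A, (x₀ i)^2 + ∑ i ∈ B, (x₀ i)^2 := Finset.sum_union hdisj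
        _ = p * a^2 + q * b^2 := by
            rw [Finset.sum_congr rfl (fun i hi => by simp [hx₀, hi] : ∀ i ∈ A, (x₀ i)^2 = a^2)]
            rw [Finset.sum_congr rfl
              (fun i hi => by simp [hx₀, (hB' i).mp hi] : ∀ i ∈ B, (x₀ i)^2 = b^2)]
            rw [Finset.sum_const, Finset.sum_const, hA, hB, nsmul_eq_mul, nsmul_eq_mul]
    have hN : x₀ ⬝ᵥ x₀ = p * a^2 + q * b^2 := by
      rw [← hQ]
      simp [dotProduct, sq]
    have hNpos : 0 < x₀ ⬝ᵥ x₀ := by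
      rw [hN]
      have f1 : 0 ≤ ((p:ℝ)-1)*a^2 := mul_nonneg (by linarith) (sq_nonneg a)
      have f2 : 0 ≤ ((q:ℝ)-1)*b^2 := mul_nonneg (by linarith) (sq_nonneg b)
      have f3 : 0 < a^2 := pow_pos hapos 2
      have f4 : 0 < b^2 := pow_pos hbpos 2
      have e1 : (p:ℝ)*a^2 = ((p:ℝ)-1)*a^2 + a^2 := by ring
      have e2 : (q:ℝ)*b^2 = ((q:ℝ)-1)*b^2 + b^2 := by ring
      linarith
    have hM₀x₀ : x₀ ⬝ᵥ (M₀ *ᵥ x₀) = ((n:ℝ) - 2 + s) * (x₀ ⬝ᵥ x₀) := by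
      rw [hM₀, aux_quad_split A B hdisj hcover x₀, hSA, hSB, hQ, hN, hncast]
      linear_combination (-((p:ℝ) * ((q:ℝ) - p + s))) * ha2
        + (-((q:ℝ) * ((p:ℝ) - q + s))) * hb2 + (2*(p:ℝ)*q) * hab + (-(2*(p:ℝ)*q)) * hs2
    have hupper : ∀ x : Fin n → ℝ, x ⬝ᵥ (M₀ *ᵥ x) ≤ ((n:ℝ) - 2 + s) * (x ⬝ᵥ x) := by
      intro x
      rw [hM₀, aux_quad_split A B hdisj hcover x]
      have hxx : x ⬝ᵥ x = ∑ i, (x i)^2 := by simp [dotProduct, sq]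
      have hsplit : ∑ i, (x i)^2 = ∑ i ∈ A, (x i)^2 + ∑ i ∈ B, (x i)^2 := by
        calc ∑ i, (x i)^2 = ∑ i ∈ A ∪ B, (x i)^2 := by rw [hcover]
          _ = _ := Finset.sum_union hdisj
      rw [hxx, hsplit]
      set SA := ∑ i ∈ A, x i with hSAd
      set SB := ∑ i ∈ B, x i with hSBd
      set QA := ∑ i ∈ A, (x i)^2 with hQAd
      set QB := ∑ i ∈ B, (x i)^2 with hQBd
      have hCSA : SA^2 ≤ (p:ℝ) * QA := by
        have := sq_sum_le_card_mul_sum_sq (s := A) (f := x)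
        rwa [hA] at this
      have hCSB : SB^2 ≤ (q:ℝ) * QB := by
        have := sq_sum_le_card_mul_sum_sq (s := B) (f := x)
        rwa [hB] at this
      have hkey : 0 ≤ (q:ℝ)*((q:ℝ)-p+s)*SA^2 - 2*((p:ℝ)*q)*(SA*SB)
          + (p:ℝ)*((p:ℝ)-q+s)*SB^2 := by
        set u := Real.sqrt ((q:ℝ)*((q:ℝ)-p+s)) with hu_def
        set w := Real.sqrt ((p:ℝ)*((p:ℝ)-q+s)) with hw_def
        have hu2 : u^2 = (q:ℝ)*((q:ℝ)-p+s) := by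
          rw [hu_def]; exact Real.sq_sqrt (by positivity)
        have hw2 : w^2 = (p:ℝ)*((p:ℝ)-q+s) := by
          rw [hw_def]; exact Real.sq_sqrt (by positivity)
        have huw : u * w = (p:ℝ)*q := by
          rw [hu_def, hw_def, ← Real.sqrt_mul (by positivity)]
          rw [show (q:ℝ)*((q:ℝ)-p+s) * ((p:ℝ)*((p:ℝ)-q+s)) = ((p:ℝ)*q)^2 from by
            linear_combination ((p:ℝ)*q) * hs2]
          exact Real.sqrt_sq (by positivity)
        have hexp : (u*SA - w*SB)^2 = u^2*SA^2 - 2*(u*w)*(SA*SB) + w^2*SB^2 := by ring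
        rw [hu2, hw2, huw] at hexp
        linarith [sq_nonneg (u*SA - w*SB), hexp]
      have hTn : 0 ≤ (q:ℝ)*((p:ℝ)+q+s) := by
        apply mul_nonneg (by linarith) (by linarith)
      have hTn' : 0 ≤ (p:ℝ)*((p:ℝ)+q+s) := by
        apply mul_nonneg (by linarith) (by linarith)
      have f1 : 0 ≤ (q:ℝ)*((p:ℝ)+q+s) * ((p:ℝ)*QA - SA^2) :=
        mul_nonneg hTn (by linarith)
      have f2 : 0 ≤ (p:ℝ)*((p:ℝ)+q+s) * ((q:ℝ)*QB - SB^2) :=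
        mul_nonneg hTn' (by linarith)
      have hmul : (p:ℝ)*q * (2*(SA+SB)^2 - 2*SA*SB - 2*(QA+QB))
          ≤ (p:ℝ)*q * (((n:ℝ)-2+s) * (QA+QB)) := by
        rw [hncast]
        linarith [f1, f2, hkey]
      have hpqpos : (0:ℝ) < (p:ℝ)*q := by linarith [hpq1]
      have := (mul_le_mul_iff_right₀ hpqpos).mp hmul
      linarith [this]
    have hAdj_cross : ∀ i j : Fin n, ¬((i ∈ A ∧ j ∈ B) ∨ (i ∈ B ∧ j ∈ A)) → ¬ G.Adj i j :=
      fun i j hc hadj => hc (hbip i j hadj)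
    have hnotboth : ∀ i : Fin n, ¬((i ∈ A ∧ i ∈ B) ∨ (i ∈ B ∧ i ∈ A)) := by
      rintro i (⟨h1, h2⟩ | ⟨h1, h2⟩)
      · exact (hB' i).mp h2 h1
      · exact (hB' i).mp h1 h2
    have hdist1 : ∀ i j : Fin n, i ≠ j → (1:ℝ) ≤ distMatrix G i j := by
      intro i j hij
      have h := hconn.pos_dist_of_ne hij
      unfold distMatrix
      exact_mod_cast h
    have hEntry : ∀ i j, M₀ i j ≤ distMatrix G i j := by
      intro i j
      by_cases hij : i = j
      · subst hij
        have h1 : M₀ i i = 0 := by simp [hM₀, hnotboth i]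
        have h2 : distMatrix G i i = 0 := by simp [distMatrix]
        rw [h1, h2]
      · by_cases hc : (i ∈ A ∧ j ∈ B) ∨ (i ∈ B ∧ j ∈ A)
        · have h1 : M₀ i j = 1 := by simp [hM₀, hc, hij]; norm_num
          rw [h1]; exact hdist1 i j hij
        · have h1 : M₀ i j = 2 := by simp [hM₀, hc, hij]
          rw [h1]
          have hnadj : ¬ G.Adj i j := hAdj_cross i j hc
          have hd1 : G.dist i j ≠ 1 := fun h => hnadj ((SimpleGraph.dist_eq_one_iff_adj).mp h)
          have hd0 : G.dist i j ≠ 0 := fun h => hij (hconn.dist_eq_zero_iff.mp h)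
          have hd2 : 2 ≤ G.dist i j := by omega
          unfold distMatrix
          exact_mod_cast hd2
    have hmono : ∀ (x : Fin n → ℝ), (∀ i, 0 ≤ x i) →
        x ⬝ᵥ (M₀ *ᵥ x) ≤ x ⬝ᵥ (distMatrix G *ᵥ x) := by
      intro x hx
      simp only [dotProduct, Matrix.mulVec]
      refine Finset.sum_le_sum fun i _ => ?_
      refine mul_le_mul_of_nonneg_left (Finset.sum_le_sum fun j _ => ?_) (hx i)
      exact mul_le_mul_of_nonneg_right (hEntry i j) (hx j)
    have hlow : ((n:ℝ) - 2 + s) ≤ distSpectralRadius G := by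
      have h1 : ((n:ℝ)-2+s) * (x₀ ⬝ᵥ x₀) ≤ distSpectralRadius G * (x₀ ⬝ᵥ x₀) := by
        calc ((n:ℝ)-2+s) * (x₀ ⬝ᵥ x₀) = x₀ ⬝ᵥ (M₀ *ᵥ x₀) := hM₀x₀.symm
          _ ≤ x₀ ⬝ᵥ (distMatrix G *ᵥ x₀) := hmono x₀ hx₀nonneg
          _ ≤ (⨆ i, (distMatrix_isHermitian G).eigenvalues i) * (x₀ ⬝ᵥ x₀) :=
              aux_rayleigh_le_iSup _ x₀
          _ = distSpectralRadius G * (x₀ ⬝ᵥ x₀) := rfl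
      exact le_of_mul_le_mul_right h1 hNpos
    refine ⟨hlow, ?_, ?_⟩
    · -- equality implies complete bipartite
      intro heq
      by_contra hncomp
      simp only [not_forall] at hncomp
      obtain ⟨u₀, v₀, huv₀⟩ := hncomp
      have hcross_nadj : ∃ u v : Fin n, u ∈ A ∧ v ∈ B ∧ ¬ G.Adj u v := by
        have h1 : ¬ G.Adj u₀ v₀ ∧ ((u₀ ∈ A ∧ v₀ ∈ B) ∨ (u₀ ∈ B ∧ v₀ ∈ A)) := by
          by_cases ha : G.Adj u₀ v₀
          · exact absurd (iff_of_true ha (hbip u₀ v₀ ha)) huv₀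
          · constructor
            · exact ha
            · by_contra hc
              exact huv₀ (iff_of_false ha hc)
        rcases h1.2 with ⟨ha1, hb1⟩ | ⟨ha1, hb1⟩
        · exact ⟨u₀, v₀, ha1, hb1, h1.1⟩
        · exact ⟨v₀, u₀, hb1, ha1, fun h => h1.1 h.symm⟩
      obtain ⟨u, v, huA, hvB, hnadj⟩ := hcross_nadj
      have hvA : ¬ v ∈ A := (hB' v).mp hvB
      have huv_ne : u ≠ v := fun h => hvA (h ▸ huA)
      have hodd : ¬ Even (G.dist u v) := by
        obtain ⟨w, hw⟩ := (hconn.preconnected u v).exists_walk_length_eq_dist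
        intro hEv
        exact hvA (((aux_walk_parity hdisj hcover hbip w).mpr
          (by rw [hw]; exact hEv)).mp huA)
      have hd3 : 3 ≤ G.dist u v := by
        have h1 : G.dist u v ≠ 1 := fun h => hnadj (SimpleGraph.dist_eq_one_iff_adj.mp h)
        have h0 : G.dist u v ≠ 0 := fun h => huv_ne (hconn.dist_eq_zero_iff.mp h)
        have h2 : G.dist u v ≠ 2 := fun h => hodd (by rw [h]; exact ⟨1, rfl⟩)
        omega
      have hterm : 2 * (a*b) ≤ x₀ u * (distMatrix G u v - M₀ u v) * x₀ v := by
        have hxu : x₀ u = a := by simp [hx₀, huA]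
        have hxv : x₀ v = b := by simp [hx₀, hvA]
        have hMuv : M₀ u v = 1 := by simp [hM₀, huA, hvB, huv_ne]; norm_num
        have hDuv : (3:ℝ) ≤ distMatrix G u v := by
          unfold distMatrix; exact_mod_cast hd3
        rw [hxu, hxv, hMuv]
        have h1 : 0 ≤ a * b := le_of_lt (mul_pos hapos hbpos)
        calc 2 * (a*b) = a * ((3:ℝ) - 1) * b := by ring
          _ ≤ a * (distMatrix G u v - 1) * b := by
              apply mul_le_mul_of_nonneg_right _ (le_of_lt hbpos)
              apply mul_le_mul_of_nonneg_left _ (le_of_lt hapos)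
              linarith
      have hdiff : 2*(a*b) ≤ x₀ ⬝ᵥ (distMatrix G *ᵥ x₀) - x₀ ⬝ᵥ (M₀ *ᵥ x₀) := by
        have hrw : x₀ ⬝ᵥ (distMatrix G *ᵥ x₀) - x₀ ⬝ᵥ (M₀ *ᵥ x₀)
            = ∑ ij ∈ (Finset.univ ×ˢ Finset.univ : Finset (Fin n × Fin n)),
                x₀ ij.1 * (distMatrix G ij.1 ij.2 - M₀ ij.1 ij.2) * x₀ ij.2 := by
          rw [Finset.sum_product]
          simp only [dotProduct, Matrix.mulVec, Finset.mul_sum,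
            ← Finset.sum_sub_distrib]
          refine Finset.sum_congr rfl fun i _ => Finset.sum_congr rfl fun j _ => by ring
        rw [hrw]
        calc 2*(a*b) ≤ x₀ u * (distMatrix G u v - M₀ u v) * x₀ v := hterm
          _ ≤ ∑ ij ∈ (Finset.univ ×ˢ Finset.univ : Finset (Fin n × Fin n)),
                x₀ ij.1 * (distMatrix G ij.1 ij.2 - M₀ ij.1 ij.2) * x₀ ij.2 := by
              have hmem : ((u, v) : Fin n × Fin n) ∈
                  (Finset.univ ×ˢ Finset.univ : Finset (Fin n × Fin n)) := by simp
              have := Finset.single_le_sum (f := fun ij : Fin n × Fin n =>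
                x₀ ij.1 * (distMatrix G ij.1 ij.2 - M₀ ij.1 ij.2) * x₀ ij.2)
                (fun ij _ => mul_nonneg (mul_nonneg (hx₀nonneg _)
                  (sub_nonneg.mpr (hEntry _ _))) (hx₀nonneg _)) hmem
              simpa using this
      have hfinal : ((n:ℝ)-2+s) * (x₀ ⬝ᵥ x₀) + 2*(a*b)
          ≤ distSpectralRadius G * (x₀ ⬝ᵥ x₀) := by
        have h1 := aux_rayleigh_le_iSup (distMatrix_isHermitian G) x₀
        have h2 : x₀ ⬝ᵥ (distMatrix G *ᵥ x₀)
            ≤ distSpectralRadius G * (x₀ ⬝ᵥ x₀) := h1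
        linarith [hM₀x₀, hdiff, h2]
      rw [heq] at hfinal
      have habpos : 0 < a * b := mul_pos hapos hbpos
      linarith
    · -- complete bipartite implies equality
      intro hcomp
      have hDeq : distMatrix G = M₀ := by
        ext i j
        by_cases hij : i = j
        · subst hij
          have h1 : M₀ i i = 0 := by simp [hM₀, hnotboth i]
          rw [h1]; simp [distMatrix]
        · by_cases hc : (i ∈ A ∧ j ∈ B) ∨ (i ∈ B ∧ j ∈ A)
          · have h1 : M₀ i j = 1 := by simp [hM₀, hc, hij]; norm_num
            have h2 : G.dist i j = 1 :=
              SimpleGraph.dist_eq_one_iff_adj.mpr ((hcomp i j).mpr hc)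
            rw [h1]
            unfold distMatrix
            exact_mod_cast h2
          · have h1 : M₀ i j = 2 := by simp [hM₀, hc, hij]
            have hnadj : ¬ G.Adj i j := hAdj_cross i j hc
            have hiAB : i ∈ A ∨ i ∈ B := by
              rcases Finset.mem_union.mp (by rw [hcover]; exact Finset.mem_univ i :
                i ∈ A ∪ B) with h | h
              · exact Or.inl h
              · exact Or.inr h
            have hw : ∃ w : Fin n, G.Adj i w ∧ G.Adj w j := by
              rcases hiAB with hiA | hiB
              · have hjA : j ∈ A := by
                  by_contra hjA
                  exact hc (Or.inl ⟨hiA, (hB' j).mpr hjA⟩)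
                obtain ⟨w, hwB⟩ := Finset.card_pos.mp (by rw [hB]; omega : 0 < B.card)
                exact ⟨w, (hcomp i w).mpr (Or.inl ⟨hiA, hwB⟩),
                  (hcomp w j).mpr (Or.inr ⟨hwB, hjA⟩)⟩
              · have hjB : j ∈ B := by
                  by_contra hjB
                  have hjA : j ∈ A := by
                    rcases Finset.mem_union.mp (by rw [hcover]; exact Finset.mem_univ j :
                      j ∈ A ∪ B) with h | h
                    · exact h
                    · exact absurd h hjB
                  exact hc (Or.inr ⟨hiB, hjA⟩)
                obtain ⟨w, hwA⟩ := Finset.card_pos.mp (by rw [hA]; omega : 0 < A.card)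
                exact ⟨w, (hcomp i w).mpr (Or.inr ⟨hiB, hwA⟩),
                  (hcomp w j).mpr (Or.inl ⟨hwA, hjB⟩)⟩
            obtain ⟨w, hw1, hw2⟩ := hw
            have hle : G.dist i j ≤ 2 := by
              have h := SimpleGraph.dist_le
                (SimpleGraph.Walk.cons hw1 (SimpleGraph.Walk.cons hw2 SimpleGraph.Walk.nil))
              simpa using h
            have hd1 : G.dist i j ≠ 1 := fun h => hnadj (SimpleGraph.dist_eq_one_iff_adj.mp h)
            have hd0 : G.dist i j ≠ 0 := fun h => hij (hconn.dist_eq_zero_iff.mp h)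
            have hd2 : G.dist i j = 2 := by omega
            rw [h1]
            unfold distMatrix
            rw [hd2]
            norm_num
      have hup : distSpectralRadius G ≤ (n:ℝ) - 2 + s := by
        have h1 : ∀ i, (distMatrix_isHermitian G).eigenvalues i ≤ (n:ℝ) - 2 + s := by
          intro i
          refine aux_eigenvalue_le_of_rayleigh _ _ (fun x => ?_) i
          rw [hDeq]
          exact hupper x
        exact ciSup_le h1
      exact le_antisymm hup hlow
end
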